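/- Let G be a 4-regular simple graph on n ≥ 8 vertices, and let u, v be distinct vertices lying in the same connected component of G. Then the number of 2-edge-cuts of G that separate u and v is at most n²/60. -/

import Mathlib

open scoped Classical
open Finset

namespace TwoCutProof

variable {n : ℕ}

/-- `e` crosses `S`: some representation has one endpoint in, one out. -/
def crossP (S : Finset (Fin n)) (e : Sym2 (Fin n)) : Prop :=
  ∃ x y, x ∈ S ∧ y ∉ S ∧ e = s(x, y)

/-- boundary edges of `S` in `G`. -/
noncomputable def bd (G : SimpleGraph (Fin n)) (S : Finset (Fin n)) : Finset (Sym2 (Fin n)) :=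
  Finset.univ.filter (fun e => e ∈ G.edgeSet ∧ crossP S e)

lemma mem_bd {G : SimpleGraph (Fin n)} {S : Finset (Fin n)} {e : Sym2 (Fin n)} :
    e ∈ bd G S ↔ e ∈ G.edgeSet ∧ crossP S e := by simp [bd]

lemma crossP_mk_iff {S : Finset (Fin n)} {x y : Fin n} :
    crossP S s(x, y) ↔ ((x ∈ S ∧ y ∉ S) ∨ (y ∈ S ∧ x ∉ S)) := by
  constructor
  · rintro ⟨a, b, ha, hb, h⟩
    rw [Sym2.eq_iff] at h
    rcases h with ⟨rfl, rfl⟩ | ⟨rfl, rfl⟩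
    · exact Or.inl ⟨ha, hb⟩
    · exact Or.inr ⟨ha, hb⟩
  · rintro (⟨h1, h2⟩ | ⟨h1, h2⟩)
    · exact ⟨x, y, h1, h2, rfl⟩
    · exact ⟨y, x, h1, h2, by rw [Sym2.eq_iff]; tauto⟩

lemma mem_bd_mk {G : SimpleGraph (Fin n)} {S : Finset (Fin n)} {x y : Fin n} :
    s(x, y) ∈ bd G S ↔ G.Adj x y ∧ ((x ∈ S ∧ y ∉ S) ∨ (y ∈ S ∧ x ∉ S)) := by
  rw [mem_bd, crossP_mk_iff, SimpleGraph.mem_edgeSet]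

/-- if an edge does not cross `S` and one endpoint is in `S`, the other is too. -/
lemma not_cross_in {G : SimpleGraph (Fin n)} {S : Finset (Fin n)} {x y : Fin n}
    (hadj : G.Adj x y) (h : s(x, y) ∉ bd G S) (hx : x ∈ S) : y ∈ S := by
  by_contra hy
  exact h (mem_bd_mk.2 ⟨hadj, Or.inl ⟨hx, hy⟩⟩)

lemma not_cross_out {G : SimpleGraph (Fin n)} {S : Finset (Fin n)} {x y : Fin n}
    (hadj : G.Adj x y) (h : s(x, y) ∉ bd G S) (hy : y ∉ S) : x ∉ S := by
  intro hx; exact hy (not_cross_in hadj h hx)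

lemma bd_compl {G : SimpleGraph (Fin n)} (S : Finset (Fin n)) :
    bd G (Finset.univ \ S) = bd G S := by
  ext e
  simp only [mem_bd, and_congr_right_iff]
  intro _
  constructor
  · rintro ⟨x, y, hx, hy, rfl⟩
    simp only [mem_sdiff, mem_univ, true_and, not_not] at hx hy
    exact crossP_mk_iff.2 (Or.inr ⟨hy, hx⟩)
  · rintro ⟨x, y, hx, hy, rfl⟩
    refine crossP_mk_iff.2 (Or.inr ⟨?_, ?_⟩) <;> simp [hx, hy]

/- ### boundary inclusion lemmas -/

lemma bd_inter_subset {G : SimpleGraph (Fin n)} (S T : Finset (Fin n)) :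
    bd G (S ∩ T) ⊆ bd G S ∪ bd G T := by
  intro e he
  rw [mem_bd] at he
  obtain ⟨hE, x, y, hx, hy, rfl⟩ := he
  simp only [mem_inter] at hx
  simp only [mem_union, mem_bd_mk]
  rw [SimpleGraph.mem_edgeSet] at hE
  by_cases hyS : y ∈ S
  · by_cases hyT : y ∈ T
    · exact absurd (mem_inter.2 ⟨hyS, hyT⟩) hy
    · exact Or.inr ⟨hE, Or.inl ⟨hx.2, hyT⟩⟩
  · exact Or.inl ⟨hE, Or.inl ⟨hx.1, hyS⟩⟩

lemma bd_union_subset {G : SimpleGraph (Fin n)} (S T : Finset (Fin n)) :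
    bd G (S ∪ T) ⊆ bd G S ∪ bd G T := by
  intro e he
  rw [mem_bd] at he
  obtain ⟨hE, x, y, hx, hy, rfl⟩ := he
  simp only [mem_union, not_or] at hy
  simp only [mem_union, mem_bd_mk]
  rw [SimpleGraph.mem_edgeSet] at hE
  rcases mem_union.1 hx with hxS | hxT
  · exact Or.inl ⟨hE, Or.inl ⟨hxS, hy.1⟩⟩
  · exact Or.inr ⟨hE, Or.inl ⟨hxT, hy.2⟩⟩

lemma bd_inter_inter_subset {G : SimpleGraph (Fin n)} (S T : Finset (Fin n)) :
    bd G (S ∩ T) ∩ bd G (S ∪ T) ⊆ bd G S ∩ bd G T := by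
  intro e he
  rw [mem_inter, mem_bd, mem_bd] at he
  obtain ⟨⟨hE, x, y, hx, hy, rfl⟩, _, hcr⟩ := he
  rw [crossP_mk_iff] at hcr
  simp only [mem_inter] at hx
  rw [SimpleGraph.mem_edgeSet] at hE
  have hyout : y ∉ S ∪ T := by
    rcases hcr with ⟨hx2, hy2⟩ | ⟨hy2, hx2⟩
    · exact hy2
    · exact absurd (mem_union.2 (Or.inl hx.1)) hx2
  simp only [mem_union, not_or] at hyout
  simp only [mem_inter, mem_bd_mk]
  exact ⟨⟨hE, Or.inl ⟨hx.1, hyout.1⟩⟩, ⟨hE, Or.inl ⟨hx.2, hyout.2⟩⟩⟩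

lemma bd_sdiff_subset {G : SimpleGraph (Fin n)} (S T : Finset (Fin n)) :
    bd G (S \ T) ⊆ bd G S ∪ bd G T := by
  intro e he
  rw [mem_bd] at he
  obtain ⟨hE, x, y, hx, hy, rfl⟩ := he
  rw [mem_sdiff] at hx
  rw [SimpleGraph.mem_edgeSet] at hE
  simp only [mem_union, mem_bd_mk]
  by_cases hyS : y ∈ S
  · have hyT : y ∈ T := by
      by_contra hyT
      exact hy (mem_sdiff.2 ⟨hyS, hyT⟩)
    exact Or.inr ⟨hE, Or.inr ⟨hyT, hx.2⟩⟩
  · exact Or.inl ⟨hE, Or.inl ⟨hx.1, hyS⟩⟩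

lemma bd_sdiff_inter_subset {G : SimpleGraph (Fin n)} (S T : Finset (Fin n)) :
    bd G (S \ T) ∩ bd G (T \ S) ⊆ bd G S ∩ bd G T := by
  intro e he
  rw [mem_inter, mem_bd, mem_bd] at he
  obtain ⟨⟨hE, x, y, hx, hy, rfl⟩, _, hcr⟩ := he
  rw [crossP_mk_iff] at hcr
  rw [mem_sdiff] at hx
  rw [SimpleGraph.mem_edgeSet] at hE
  have hyTS : y ∈ T \ S := by
    rcases hcr with ⟨hx2, _⟩ | ⟨hy2, _⟩
    · exact absurd (mem_sdiff.1 hx2).1 hx.2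
    · exact hy2
  rw [mem_sdiff] at hyTS
  simp only [mem_inter, mem_bd_mk]
  exact ⟨⟨hE, Or.inl ⟨hx.1, hyTS.2⟩⟩, ⟨hE, Or.inr ⟨hyTS.1, hx.2⟩⟩⟩

/- ### degree counting -/

lemma x_mem_of_mem_bd_singleton_aux {G : SimpleGraph (Fin n)} {x : Fin n} {e : Sym2 (Fin n)}
    (he : e ∈ bd G {x}) : ∃ y, G.Adj x y ∧ e = s(x, y) := by
  rw [mem_bd] at he
  obtain ⟨hE, a, b, ha, hb, rfl⟩ := he
  simp only [mem_singleton] at ha hb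
  subst ha
  exact ⟨b, G.mem_edgeSet.1 hE, rfl⟩

lemma bd_singleton {G : SimpleGraph (Fin n)} (x : Fin n) :
    bd G {x} = (G.neighborFinset x).image (fun y => s(x, y)) := by
  ext e
  constructor
  · intro he
    obtain ⟨y, hadj, rfl⟩ := x_mem_of_mem_bd_singleton_aux he
    exact mem_image.2 ⟨y, by simp [SimpleGraph.mem_neighborFinset, hadj], rfl⟩
  · intro he
    obtain ⟨y, hy, rfl⟩ := mem_image.1 he
    rw [SimpleGraph.mem_neighborFinset] at hy
    exact mem_bd_mk.2 ⟨hy, Or.inl ⟨mem_singleton_self x, fun h => hy.ne' (mem_singleton.1 h)⟩⟩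

lemma image_mk_injOn {G : SimpleGraph (Fin n)} (x : Fin n) (s : Finset (Fin n))
    (hs : s ⊆ G.neighborFinset x) : Set.InjOn (fun y => s(x, y)) s := by
  intro a ha b hb hab
  simp only at hab
  rcases Sym2.eq_iff.1 hab with ⟨_, h⟩ | ⟨h1, h2⟩
  · exact h
  · have h3 := (SimpleGraph.mem_neighborFinset G x a).1 (hs ha)
    exact absurd h2 h3.ne'

lemma card_bd_singleton {G : SimpleGraph (Fin n)} (hreg : G.IsRegularOfDegree 4) (x : Fin n) :
    (bd G {x}).card = 4 := by
  rw [bd_singleton, Finset.card_image_of_injOn (image_mk_injOn x _ (le_refl _))]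
  rw [SimpleGraph.card_neighborFinset_eq_degree]
  exact hreg x

/-- key insertion identity. -/
lemma bd_insert_card {G : SimpleGraph (Fin n)} (hreg : G.IsRegularOfDegree 4)
    {x : Fin n} {S : Finset (Fin n)} (hx : x ∉ S) :
    (bd G (insert x S)).card + 2 * (G.neighborFinset x ∩ S).card = (bd G S).card + 4 := by
  classical
  set A : Finset (Sym2 (Fin n)) := bd G {x} with hA
  have memA : ∀ e ∈ G.edgeSet, (e ∈ A ↔ x ∈ e) := by
    intro e hE
    constructor
    · intro he
      obtain ⟨y, _, rfl⟩ := x_mem_of_mem_bd_singleton_aux he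
      exact Sym2.mem_mk_left x y
    · intro hxe
      obtain ⟨y, rfl⟩ := Sym2.mem_iff_exists.1 hxe
      have hadj : G.Adj x y := G.mem_edgeSet.1 hE
      exact mem_bd_mk.2 ⟨hadj, Or.inl ⟨mem_singleton_self _, fun h => hadj.ne' (mem_singleton.1 h)⟩⟩
  have hsame : bd G (insert x S) \ A = bd G S \ A := by
    ext e
    simp only [mem_sdiff]
    constructor
    · rintro ⟨he, hnA⟩
      rw [mem_bd] at he
      obtain ⟨hE, a, b, ha, hb, rfl⟩ := he
      have hxe : x ∉ s(a, b) := fun h => hnA ((memA _ hE).2 h)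
      rw [Sym2.mem_iff] at hxe
      push_neg at hxe
      refine ⟨mem_bd.2 ⟨hE, a, b, ?_, fun h => hb (mem_insert_of_mem h), rfl⟩, hnA⟩
      rcases mem_insert.1 ha with h | h
      · exact absurd h.symm hxe.1
      · exact h
    · rintro ⟨he, hnA⟩
      rw [mem_bd] at he
      obtain ⟨hE, a, b, ha, hb, rfl⟩ := he
      have hxe : x ∉ s(a, b) := fun h => hnA ((memA _ hE).2 h)
      rw [Sym2.mem_iff] at hxe
      push_neg at hxe
      refine ⟨mem_bd.2 ⟨hE, a, b, mem_insert_of_mem ha, ?_, rfl⟩, hnA⟩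
      intro hbI
      rcases mem_insert.1 hbI with h | h
      · exact hxe.2 h.symm
      · exact hb h
  -- edges through x crossing S: to neighbors inside S
  have hXS : bd G S ∩ A = (G.neighborFinset x ∩ S).image (fun y => s(x, y)) := by
    ext e
    constructor
    · intro he
      rw [mem_inter] at he
      obtain ⟨y, hadj, rfl⟩ := x_mem_of_mem_bd_singleton_aux he.2
      have := (mem_bd_mk.1 he.1).2
      have hyS : y ∈ S := by
        rcases this with ⟨h1, h2⟩ | ⟨h1, h2⟩
        · exact absurd h1 hx
        · exact h1
      exact mem_image.2 ⟨y, by simp [SimpleGraph.mem_neighborFinset, hadj, hyS], rfl⟩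
    · intro he
      obtain ⟨y, hy, rfl⟩ := mem_image.1 he
      rw [mem_inter, SimpleGraph.mem_neighborFinset] at hy
      refine mem_inter.2 ⟨mem_bd_mk.2 ⟨hy.1, Or.inr ⟨hy.2, hx⟩⟩, mem_bd_mk.2 ⟨hy.1, Or.inl ⟨mem_singleton_self _, fun h => hy.1.ne' (mem_singleton.1 h)⟩⟩⟩
  have hXI : bd G (insert x S) ∩ A = (G.neighborFinset x \ insert x S).image (fun y => s(x, y)) := by
    ext e
    constructor
    · intro he
      rw [mem_inter] at he
      obtain ⟨y, hadj, rfl⟩ := x_mem_of_mem_bd_singleton_aux he.2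
      have := (mem_bd_mk.1 he.1).2
      have hyI : y ∉ insert x S := by
        rcases this with ⟨h1, h2⟩ | ⟨h1, h2⟩
        · exact h2
        · exact absurd (mem_insert_self x S) h2
      exact mem_image.2 ⟨y, by simp [SimpleGraph.mem_neighborFinset, hadj, hyI], rfl⟩
    · intro he
      obtain ⟨y, hy, rfl⟩ := mem_image.1 he
      rw [mem_sdiff, SimpleGraph.mem_neighborFinset] at hy
      refine mem_inter.2 ⟨mem_bd_mk.2 ⟨hy.1, Or.inl ⟨mem_insert_self x S, hy.2⟩⟩, mem_bd_mk.2 ⟨hy.1, Or.inl ⟨mem_singleton_self _, fun h => hy.1.ne' (mem_singleton.1 h)⟩⟩⟩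
  have c1 : (bd G (insert x S) ∩ A).card + (bd G (insert x S) \ A).card = (bd G (insert x S)).card :=
    card_inter_add_card_sdiff _ _
  have c2 : (bd G S ∩ A).card + (bd G S \ A).card = (bd G S).card :=
    card_inter_add_card_sdiff _ _
  have e1 : (bd G S ∩ A).card = (G.neighborFinset x ∩ S).card := by
    rw [hXS]
    exact Finset.card_image_of_injOn (image_mk_injOn x _ (inter_subset_left))
  have e2 : (bd G (insert x S) ∩ A).card = (G.neighborFinset x \ insert x S).card := by
    rw [hXI]
    exact Finset.card_image_of_injOn (image_mk_injOn x _ (sdiff_subset))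
  have hnbx : x ∉ G.neighborFinset x := by
    simp [SimpleGraph.mem_neighborFinset]
  have e3 : (G.neighborFinset x \ insert x S).card + (G.neighborFinset x ∩ S).card = 4 := by
    have : G.neighborFinset x \ insert x S = G.neighborFinset x \ S := by
      ext y
      simp only [mem_sdiff, mem_insert, not_or]
      constructor
      · rintro ⟨h1, h2, h3⟩; exact ⟨h1, h3⟩
      · rintro ⟨h1, h3⟩
        exact ⟨h1, fun h => hnbx (h ▸ h1), h3⟩
    rw [this]
    have := card_inter_add_card_sdiff (G.neighborFinset x) S
    rw [SimpleGraph.card_neighborFinset_eq_degree, hreg x] at this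
    omega
  have e4 : (bd G (insert x S) \ A).card = (bd G S \ A).card := by rw [hsame]
  omega

lemma bd_empty (G : SimpleGraph (Fin n)) : bd G (∅ : Finset (Fin n)) = ∅ := by
  ext e
  simp only [mem_bd, notMem_empty, iff_false, not_and]
  rintro _ ⟨a, b, ha, _, _⟩
  exact absurd ha (notMem_empty a)

lemma bd_even {G : SimpleGraph (Fin n)} (hreg : G.IsRegularOfDegree 4) (S : Finset (Fin n)) :
    Even (bd G S).card := by
  classical
  induction S using Finset.induction_on with
  | empty => simp [bd_empty]
  | @insert x S hx ih =>
      have hkey := bd_insert_card hreg hx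
      rcases ih with ⟨k, hk⟩
      exact ⟨k + 2 - (G.neighborFinset x ∩ S).card, by omega⟩

lemma bd_card_lower {G : SimpleGraph (Fin n)} (hreg : G.IsRegularOfDegree 4) (S : Finset (Fin n)) :
    5 * S.card ≤ S.card * S.card + (bd G S).card := by
  classical
  induction S using Finset.induction_on with
  | empty => simp
  | @insert x S hx ih =>
      have hkey := bd_insert_card hreg hx
      have ha : (G.neighborFinset x ∩ S).card ≤ S.card := card_le_card inter_subset_right
      have hcard : (insert x S).card = S.card + 1 := card_insert_of_notMem hx
      rw [hcard]
      nlinarith [ih, hkey, ha]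

lemma card_ge_five {G : SimpleGraph (Fin n)} (hreg : G.IsRegularOfDegree 4) {S : Finset (Fin n)}
    (h2 : (bd G S).card = 2) (hne : S.Nonempty) : 5 ≤ S.card := by
  have := bd_card_lower hreg S
  rw [h2] at this
  have h1 : 1 ≤ S.card := card_pos.2 hne
  nlinarith

lemma card_ge_four {G : SimpleGraph (Fin n)} (hreg : G.IsRegularOfDegree 4) {S : Finset (Fin n)}
    (h4 : (bd G S).card ≤ 4) (hne : 2 ≤ S.card) : 4 ≤ S.card := by
  have := bd_card_lower hreg S
  nlinarith

/- ### connectivity lower bound -/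

lemma bd_nonempty_of_reachable {G : SimpleGraph (Fin n)} {x y : Fin n} {B : Finset (Fin n)}
    (hr : G.Reachable x y) (hx : x ∈ B) (hy : y ∉ B) : (bd G B).Nonempty := by
  obtain ⟨w⟩ := hr
  obtain ⟨d, _, hd1, hd2⟩ := w.exists_boundary_dart (↑B : Set (Fin n)) (by simpa using hx) (by simpa using hy)
  refine ⟨d.edge, mem_bd.2 ⟨d.edge_mem, d.toProd.1, d.toProd.2, by simpa using hd1, by simpa using hd2, ?_⟩⟩
  rfl

lemma two_le_bd_of_reachable {G : SimpleGraph (Fin n)} (hreg : G.IsRegularOfDegree 4)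
    {x y : Fin n} {B : Finset (Fin n)}
    (hr : G.Reachable x y) (hx : x ∈ B) (hy : y ∉ B) : 2 ≤ (bd G B).card := by
  have h1 : 1 ≤ (bd G B).card := card_pos.2 (bd_nonempty_of_reachable hr hx hy)
  rcases bd_even hreg B with ⟨k, hk⟩
  omega

/- ### the family of u-sides of 2-edge cuts -/

variable (G : SimpleGraph (Fin n)) (u v : Fin n)

noncomputable def comp (F : Set (Sym2 (Fin n))) : Finset (Fin n) :=
  Finset.univ.filter (fun x => (G.deleteEdges F).Reachable u x)

def good (S : Finset (Fin n)) : Prop :=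
  u ∈ S ∧ v ∉ S ∧ (bd G S).card = 2 ∧ S = comp G u ↑(bd G S)

noncomputable def SS : Finset (Finset (Fin n)) := Finset.univ.filter (good G u v)

variable {G u v}

lemma mem_comp_iff {F : Set (Sym2 (Fin n))} {x : Fin n} :
    x ∈ comp G u F ↔ (G.deleteEdges F).Reachable u x := by simp [comp]

lemma mem_SS_iff {S : Finset (Fin n)} : S ∈ SS G u v ↔ good G u v S := by simp [SS]

lemma good.uS {S : Finset (Fin n)} (hS : good G u v S) : u ∈ S := hS.1
lemma good.vS {S : Finset (Fin n)} (hS : good G u v S) : v ∉ S := hS.2.1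
lemma good.two {S : Finset (Fin n)} (hS : good G u v S) : (bd G S).card = 2 := hS.2.2.1

lemma good.reach {S : Finset (Fin n)} (hS : good G u v S) : ∀ x ∈ S, G.Reachable u x := by
  intro x hx
  rw [hS.2.2.2, mem_comp_iff] at hx
  exact hx.mono (SimpleGraph.deleteEdges_le _)

lemma good.bd_inj {S T : Finset (Fin n)} (hS : good G u v S) (hT : good G u v T)
    (h : bd G S = bd G T) : S = T := by
  rw [hS.2.2.2, hT.2.2.2, h]

lemma not_cross_of_both_out {S : Finset (Fin n)} {x y : Fin n}
    (hx : x ∉ S) (hy : y ∉ S) : s(x, y) ∉ bd G S := by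
  intro h
  rcases (mem_bd_mk.1 h).2 with ⟨h1, _⟩ | ⟨h1, _⟩
  exacts [hx h1, hy h1]

lemma not_cross_of_both_in {S : Finset (Fin n)} {x y : Fin n}
    (hx : x ∈ S) (hy : y ∈ S) : s(x, y) ∉ bd G S := by
  intro h
  rcases (mem_bd_mk.1 h).2 with ⟨_, h2⟩ | ⟨_, h2⟩
  exacts [h2 hy, h2 hx]

/-- reachability in the graph with the boundary of `W` deleted cannot leave `W`. -/
lemma stay_in (W : Finset (Fin n)) {a b : Fin n}
    (hr : (G.deleteEdges ↑(bd G W)).Reachable a b) (ha : a ∈ W) : b ∈ W := by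
  by_contra hb
  obtain ⟨w⟩ := hr
  obtain ⟨d, _, h1, h2⟩ := w.exists_boundary_dart (↑W : Set (Fin n)) (by simpa using ha)
    (by simpa using hb)
  have hadj : (G.deleteEdges ↑(bd G W)).Adj d.toProd.1 d.toProd.2 := d.adj
  rw [SimpleGraph.deleteEdges_adj] at hadj
  simp only [Finset.coe_sort_coe, Finset.mem_coe] at h1 h2 hadj
  exact hadj.2 (mem_bd_mk.2 ⟨hadj.1, Or.inl ⟨by simpa using h1, by simpa using h2⟩⟩)

/-- reconstruction: a set with boundary of size 2, containing `u`, not `v`, inside the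
component of `u`, is the `u`-side of its boundary cut. -/
lemma good_of_bd_two (hreg : G.IsRegularOfDegree 4) (hreach : G.Reachable u v)
    {W : Finset (Fin n)} (hu : u ∈ W) (hv : v ∉ W) (h2 : (bd G W).card = 2)
    (hK : ∀ x ∈ W, G.Reachable u x) : good G u v W := by
  classical
  set F : Set (Sym2 (Fin n)) := ↑(bd G W) with hF
  set P : Finset (Fin n) := comp G u F with hP
  have hPW : P ⊆ W := by
    intro x hx
    exact stay_in W (mem_comp_iff.1 hx) hu
  have bd_sub : ∀ (R : Finset (Fin n)), (∀ {a b : Fin n}, (G.deleteEdges F).Reachable a b → a ∈ R → b ∈ R) →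
      bd G R ⊆ bd G W := by
    intro R hRcl e he
    rw [mem_bd] at he
    obtain ⟨hE, a, b, ha, hb, rfl⟩ := he
    by_contra hno
    have hadj : (G.deleteEdges F).Adj a b := by
      rw [SimpleGraph.deleteEdges_adj]
      exact ⟨G.mem_edgeSet.1 hE, by simpa [hF] using hno⟩
    exact hb (hRcl hadj.reachable ha)
  have hPcl : ∀ {a b : Fin n}, (G.deleteEdges F).Reachable a b → a ∈ P → b ∈ P := by
    intro a b hab ha
    rw [mem_comp_iff] at ha ⊢
    exact ha.trans hab
  have hbdP_sub : bd G P ⊆ bd G W := bd_sub P hPcl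
  have huP : u ∈ P := mem_comp_iff.2 (SimpleGraph.Reachable.refl u)
  have hvP : v ∉ P := fun h => hv (hPW h)
  have hbdP : bd G P = bd G W := by
    apply Finset.eq_of_subset_of_card_le hbdP_sub
    rw [h2]
    exact two_le_bd_of_reachable hreg hreach huP hvP
  have hWP : W ⊆ P := by
    intro x hx
    by_contra hxP
    set R : Finset (Fin n) := Finset.univ.filter (fun y => (G.deleteEdges F).Reachable x y) with hR
    have hxR : x ∈ R := by
      simp only [hR, Finset.mem_filter, Finset.mem_univ, true_and]
      exact SimpleGraph.Reachable.refl x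
    have hRcl : ∀ {a b : Fin n}, (G.deleteEdges F).Reachable a b → a ∈ R → b ∈ R := by
      intro a b hab ha
      simp only [hR, Finset.mem_filter, Finset.mem_univ, true_and] at ha ⊢
      exact ha.trans hab
    have hRW : R ⊆ W := by
      intro y hy
      simp only [hR, Finset.mem_filter, Finset.mem_univ, true_and] at hy
      exact stay_in W hy hx
    have hbdR_sub : bd G R ⊆ bd G W := bd_sub R hRcl
    have hvR : v ∉ R := fun h => hv (hRW h)
    have hbdR : bd G R = bd G W := by
      apply Finset.eq_of_subset_of_card_le hbdR_sub
      rw [h2]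
      exact two_le_bd_of_reachable hreg ((hK x hx).symm.trans hreach) hxR hvR
    have hdisj : ∀ y, y ∈ P → y ∉ R := by
      intro y hyP hyR
      simp only [hR, Finset.mem_filter, Finset.mem_univ, true_and] at hyR
      exact hxP (mem_comp_iff.2 ((mem_comp_iff.1 hyP).trans hyR.symm))
    -- pick an edge of bd W; it crosses both P and R, contradiction
    have hne : (bd G P).Nonempty := by
      rw [hbdP, ← Finset.card_pos, h2]; omega
    obtain ⟨e, heP⟩ := hne
    have heW : e ∈ bd G W := hbdP_sub heP
    have heR : e ∈ bd G R := by rw [hbdR, ← hbdP]; exact heP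
    rw [mem_bd] at heP
    obtain ⟨hE, a, b, haP, hbP, rfl⟩ := heP
    have hbR : b ∈ R := by
      rcases (mem_bd_mk.1 heR).2 with ⟨h1, _⟩ | ⟨h1, _⟩
      · exact absurd h1 (hdisj a haP)
      · exact h1
    exact not_cross_of_both_in (hPW haP) (hRW hbR) heW
  have hWeq : W = P := Finset.Subset.antisymm hWP hPW
  exact ⟨hu, hv, h2, hWeq⟩

/-- every qualifying cut `F` gives a good set whose boundary is exactly `F`. -/
lemma cut_good (hreg : G.IsRegularOfDegree 4) (hreach : G.Reachable u v)
    {F : Set (Sym2 (Fin n))} (hF1 : F ⊆ G.edgeSet) (hF2 : F.ncard = 2)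
    (hF3 : ¬(G.deleteEdges F).Reachable u v) :
    good G u v (comp G u F) ∧ ↑(bd G (comp G u F)) = F := by
  classical
  set S : Finset (Fin n) := comp G u F with hS
  have huS : u ∈ S := mem_comp_iff.2 (SimpleGraph.Reachable.refl u)
  have hvS : v ∉ S := fun h => hF3 (mem_comp_iff.1 h)
  have hsub : ↑(bd G S) ⊆ F := by
    intro e he
    simp only [Finset.mem_coe] at he
    rw [mem_bd] at he
    obtain ⟨hE, a, b, ha, hb, rfl⟩ := he
    by_contra hno
    have hadj : (G.deleteEdges F).Adj a b := by
      rw [SimpleGraph.deleteEdges_adj]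
      exact ⟨G.mem_edgeSet.1 hE, hno⟩
    exact hb (mem_comp_iff.2 ((mem_comp_iff.1 ha).trans hadj.reachable))
  have hle : (bd G S).card ≤ 2 := by
    have := Set.ncard_le_ncard hsub (Set.toFinite F)
    rwa [Set.ncard_coe_finset, hF2] at this
  have hge : 2 ≤ (bd G S).card := two_le_bd_of_reachable hreg hreach huS hvS
  have hcard : (bd G S).card = 2 := le_antisymm hle hge
  have hFeq : ↑(bd G S) = F := by
    apply Set.eq_of_subset_of_ncard_le hsub _ (Set.toFinite F)
    rw [Set.ncard_coe_finset, hF2, hcard]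
  refine ⟨⟨huS, hvS, hcard, ?_⟩, hFeq⟩
  rw [hFeq]

/- ### uncrossing -/

lemma corner_two (hreg : G.IsRegularOfDegree 4) (hreach : G.Reachable u v)
    {B : Finset (Fin n)} {x : Fin n} (hx : x ∈ B) (hux : G.Reachable u x) (hv : v ∉ B) :
    2 ≤ (bd G B).card :=
  two_le_bd_of_reachable hreg (hux.symm.trans hreach) hx hv

lemma nested_of_shared (hreg : G.IsRegularOfDegree 4) (hreach : G.Reachable u v)
    {S T : Finset (Fin n)} (hS : good G u v S) (hT : good G u v T)
    {g : Sym2 (Fin n)} (hgS : g ∈ bd G S) (hgT : g ∈ bd G T) : S ⊆ T ∨ T ⊆ S := by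
  classical
  by_contra hcon
  push_neg at hcon
  obtain ⟨hST, hTS⟩ := hcon
  obtain ⟨p, hpS, hpT⟩ := Finset.not_subset.1 hST
  obtain ⟨q, hqT, hqS⟩ := Finset.not_subset.1 hTS
  have dST : 2 ≤ (bd G (S \ T)).card :=
    corner_two hreg hreach (Finset.mem_sdiff.2 ⟨hpS, hpT⟩) (hS.reach p hpS)
      (fun h => hS.vS (Finset.mem_sdiff.1 h).1)
  have dTS : 2 ≤ (bd G (T \ S)).card :=
    corner_two hreg hreach (Finset.mem_sdiff.2 ⟨hqT, hqS⟩) (hT.reach q hqT)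
      (fun h => hT.vS (Finset.mem_sdiff.1 h).1)
  have dI : 2 ≤ (bd G (S ∩ T)).card :=
    corner_two hreg hreach (Finset.mem_inter.2 ⟨hS.uS, hT.uS⟩) (SimpleGraph.Reachable.refl u)
      (fun h => hS.vS (Finset.mem_inter.1 h).1)
  have dU : 2 ≤ (bd G (S ∪ T)).card :=
    corner_two hreg hreach (Finset.mem_union.2 (Or.inl hS.uS)) (SimpleGraph.Reachable.refl u)
      (fun h => (Finset.mem_union.1 h).elim hS.vS hT.vS)
  rw [mem_bd] at hgS
  obtain ⟨hE, x, y, hx, hy, rfl⟩ := hgS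
  have hgS' : s(x, y) ∈ bd G S := mem_bd.2 ⟨hE, x, y, hx, hy, rfl⟩
  rcases (mem_bd_mk.1 hgT).2 with ⟨hxT, hyT⟩ | ⟨hyT, hxT⟩
  · -- same direction: strict posimodularity
    have hnot1 : s(x, y) ∉ bd G (S \ T) :=
      not_cross_of_both_out (fun h => (Finset.mem_sdiff.1 h).2 hxT) (fun h => hy (Finset.mem_sdiff.1 h).1)
    have hnot2 : s(x, y) ∉ bd G (T \ S) :=
      not_cross_of_both_out (fun h => (Finset.mem_sdiff.1 h).2 hx) (fun h => hyT (Finset.mem_sdiff.1 h).1)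
    have hsub1 : bd G (S \ T) ∪ bd G (T \ S) ⊆ (bd G S ∪ bd G T).erase s(x, y) := by
      rw [Finset.subset_erase]
      constructor
      · apply Finset.union_subset (bd_sdiff_subset S T)
        intro e he
        rcases Finset.mem_union.1 (bd_sdiff_subset T S he) with h | h
        · exact Finset.mem_union.2 (Or.inr h)
        · exact Finset.mem_union.2 (Or.inl h)
      · simp [hnot1, hnot2]
    have hsub2 : bd G (S \ T) ∩ bd G (T \ S) ⊆ (bd G S ∩ bd G T).erase s(x, y) := by
      rw [Finset.subset_erase]
      exact ⟨bd_sdiff_inter_subset S T, by simp [hnot1, hnot2]⟩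
    have hmemU : s(x, y) ∈ bd G S ∪ bd G T := Finset.mem_union.2 (Or.inl hgS')
    have hmemI : s(x, y) ∈ bd G S ∩ bd G T := Finset.mem_inter.2 ⟨hgS', hgT⟩
    have c1 := Finset.card_union_add_card_inter (bd G (S \ T)) (bd G (T \ S))
    have c2 := Finset.card_union_add_card_inter (bd G S) (bd G T)
    have l1 : (bd G (S \ T) ∪ bd G (T \ S)).card ≤ (bd G S ∪ bd G T).card - 1 := by
      calc (bd G (S \ T) ∪ bd G (T \ S)).card ≤ ((bd G S ∪ bd G T).erase s(x, y)).card :=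
            Finset.card_le_card hsub1
        _ = (bd G S ∪ bd G T).card - 1 := Finset.card_erase_of_mem hmemU
    have l2 : (bd G (S \ T) ∩ bd G (T \ S)).card ≤ (bd G S ∩ bd G T).card - 1 := by
      calc (bd G (S \ T) ∩ bd G (T \ S)).card ≤ ((bd G S ∩ bd G T).erase s(x, y)).card :=
            Finset.card_le_card hsub2
        _ = (bd G S ∩ bd G T).card - 1 := Finset.card_erase_of_mem hmemI
    have hIpos : 1 ≤ (bd G S ∩ bd G T).card := Finset.card_pos.2 ⟨_, hmemI⟩
    have hUpos : 1 ≤ (bd G S ∪ bd G T).card := Finset.card_pos.2 ⟨_, hmemU⟩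
    have := hS.two
    have := hT.two
    omega
  · -- opposite direction: strict submodularity
    have hnot1 : s(x, y) ∉ bd G (S ∩ T) :=
      not_cross_of_both_out (fun h => hxT (Finset.mem_inter.1 h).2) (fun h => hy (Finset.mem_inter.1 h).1)
    have hnot2 : s(x, y) ∉ bd G (S ∪ T) :=
      not_cross_of_both_in (Finset.mem_union.2 (Or.inl hx)) (Finset.mem_union.2 (Or.inr hyT))
    have hsub1 : bd G (S ∩ T) ∪ bd G (S ∪ T) ⊆ (bd G S ∪ bd G T).erase s(x, y) := by
      rw [Finset.subset_erase]
      exact ⟨Finset.union_subset (bd_inter_subset S T) (bd_union_subset S T), by simp [hnot1, hnot2]⟩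
    have hsub2 : bd G (S ∩ T) ∩ bd G (S ∪ T) ⊆ (bd G S ∩ bd G T).erase s(x, y) := by
      rw [Finset.subset_erase]
      exact ⟨bd_inter_inter_subset S T, by simp [hnot1, hnot2]⟩
    have hmemU : s(x, y) ∈ bd G S ∪ bd G T := Finset.mem_union.2 (Or.inl hgS')
    have hmemI : s(x, y) ∈ bd G S ∩ bd G T := Finset.mem_inter.2 ⟨hgS', hgT⟩
    have c1 := Finset.card_union_add_card_inter (bd G (S ∩ T)) (bd G (S ∪ T))
    have c2 := Finset.card_union_add_card_inter (bd G S) (bd G T)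
    have l1 : (bd G (S ∩ T) ∪ bd G (S ∪ T)).card ≤ (bd G S ∪ bd G T).card - 1 := by
      calc (bd G (S ∩ T) ∪ bd G (S ∪ T)).card ≤ ((bd G S ∪ bd G T).erase s(x, y)).card :=
            Finset.card_le_card hsub1
        _ = (bd G S ∪ bd G T).card - 1 := Finset.card_erase_of_mem hmemU
    have l2 : (bd G (S ∩ T) ∩ bd G (S ∪ T)).card ≤ (bd G S ∩ bd G T).card - 1 := by
      calc (bd G (S ∩ T) ∩ bd G (S ∪ T)).card ≤ ((bd G S ∩ bd G T).erase s(x, y)).card :=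
            Finset.card_le_card hsub2
        _ = (bd G S ∩ bd G T).card - 1 := Finset.card_erase_of_mem hmemI
    have hIpos : 1 ≤ (bd G S ∩ bd G T).card := Finset.card_pos.2 ⟨_, hmemI⟩
    have hUpos : 1 ≤ (bd G S ∪ bd G T).card := Finset.card_pos.2 ⟨_, hmemU⟩
    have := hS.two
    have := hT.two
    omega

lemma uncross (hreg : G.IsRegularOfDegree 4) (hreach : G.Reachable u v)
    {S T : Finset (Fin n)} (hS : good G u v S) (hT : good G u v T)
    (h1 : ¬S ⊆ T) (h2 : ¬T ⊆ S) :
    good G u v (S ∩ T) ∧ good G u v (S ∪ T) := by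
  classical
  have dI : 2 ≤ (bd G (S ∩ T)).card :=
    corner_two hreg hreach (Finset.mem_inter.2 ⟨hS.uS, hT.uS⟩) (SimpleGraph.Reachable.refl u)
      (fun h => hS.vS (Finset.mem_inter.1 h).1)
  have dU : 2 ≤ (bd G (S ∪ T)).card :=
    corner_two hreg hreach (Finset.mem_union.2 (Or.inl hS.uS)) (SimpleGraph.Reachable.refl u)
      (fun h => (Finset.mem_union.1 h).elim hS.vS hT.vS)
  have hsub1 : bd G (S ∩ T) ∪ bd G (S ∪ T) ⊆ bd G S ∪ bd G T :=
    Finset.union_subset (bd_inter_subset S T) (bd_union_subset S T)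
  have c1 := Finset.card_union_add_card_inter (bd G (S ∩ T)) (bd G (S ∪ T))
  have c2 := Finset.card_union_add_card_inter (bd G S) (bd G T)
  have l1 : (bd G (S ∩ T) ∪ bd G (S ∪ T)).card ≤ (bd G S ∪ bd G T).card :=
    Finset.card_le_card hsub1
  have l2 : (bd G (S ∩ T) ∩ bd G (S ∪ T)).card ≤ (bd G S ∩ bd G T).card :=
    Finset.card_le_card (bd_inter_inter_subset S T)
  have hSc := hS.two
  have hTc := hT.two
  have hIc : (bd G (S ∩ T)).card = 2 := by omega
  have hUc : (bd G (S ∪ T)).card = 2 := by omega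
  constructor
  · exact good_of_bd_two hreg hreach (Finset.mem_inter.2 ⟨hS.uS, hT.uS⟩)
      (fun h => hS.vS (Finset.mem_inter.1 h).1) hIc
      (fun x hx => hS.reach x (Finset.mem_inter.1 hx).1)
  · exact good_of_bd_two hreg hreach (Finset.mem_union.2 (Or.inl hS.uS))
      (fun h => (Finset.mem_union.1 h).elim hS.vS hT.vS) hUc
      (fun x hx => (Finset.mem_union.1 hx).elim (hS.reach x) (hT.reach x))

/- ### nested gaps -/

lemma gap_le_four (hreg : G.IsRegularOfDegree 4)
    {S T : Finset (Fin n)} (hS : good G u v S) (hT : good G u v T) :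
    (bd G (T \ S)).card ≤ 4 := by
  have hsub : bd G (T \ S) ⊆ bd G T ∪ bd G S := bd_sdiff_subset T S
  calc (bd G (T \ S)).card ≤ (bd G T ∪ bd G S).card := Finset.card_le_card hsub
    _ ≤ (bd G T).card + (bd G S).card := Finset.card_union_le _ _
    _ ≤ 4 := by rw [hS.two, hT.two]

lemma gap_ge_five_of_shared (hreg : G.IsRegularOfDegree 4) (hreach : G.Reachable u v)
    {S T : Finset (Fin n)} (hS : good G u v S) (hT : good G u v T)
    (hsub : S ⊆ T) (hne : S ≠ T) {g : Sym2 (Fin n)}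
    (hgS : g ∈ bd G S) (hgT : g ∈ bd G T) : 5 ≤ (T \ S).card := by
  classical
  obtain ⟨p, hpT, hpS⟩ := Finset.not_subset.1 (fun h => hne (Finset.Subset.antisymm hsub h))
  have hd2 : 2 ≤ (bd G (T \ S)).card :=
    corner_two hreg hreach (Finset.mem_sdiff.2 ⟨hpT, hpS⟩) (hT.reach p hpT)
      (fun h => hT.vS (Finset.mem_sdiff.1 h).1)
  rw [mem_bd] at hgS
  obtain ⟨hE, x, y, hx, hy, rfl⟩ := hgS
  have hyT : y ∉ T := by
    rcases (mem_bd_mk.1 hgT).2 with ⟨_, h2⟩ | ⟨_, h2⟩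
    · exact h2
    · exact absurd (hsub hx) h2
  have hnot : s(x, y) ∉ bd G (T \ S) :=
    not_cross_of_both_out (fun h => (Finset.mem_sdiff.1 h).2 hx) (fun h => hyT (Finset.mem_sdiff.1 h).1)
  have hsub2 : bd G (T \ S) ⊆ (bd G T ∪ bd G S).erase s(x, y) := by
    rw [Finset.subset_erase]
    exact ⟨bd_sdiff_subset T S, hnot⟩
  have hmem : s(x, y) ∈ bd G T ∪ bd G S := Finset.mem_union.2 (Or.inl hgT)
  have hle3 : (bd G (T \ S)).card ≤ 3 := by
    have h1 : (bd G (T \ S)).card ≤ (bd G T ∪ bd G S).card - 1 := by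
      calc (bd G (T \ S)).card ≤ ((bd G T ∪ bd G S).erase s(x, y)).card :=
            Finset.card_le_card hsub2
        _ = (bd G T ∪ bd G S).card - 1 := Finset.card_erase_of_mem hmem
    have h2 : (bd G T ∪ bd G S).card ≤ 4 := by
      calc (bd G T ∪ bd G S).card ≤ (bd G T).card + (bd G S).card := Finset.card_union_le _ _
        _ ≤ 4 := by rw [hS.two, hT.two]
    omega
  rcases bd_even hreg (T \ S) with ⟨k, hk⟩
  have hd2' : (bd G (T \ S)).card = 2 := by omega
  exact card_ge_five hreg hd2' ⟨p, Finset.mem_sdiff.2 ⟨hpT, hpS⟩⟩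

/-- isolated singleton steps: two consecutive boundary-disjoint steps cannot both
have a singleton gap (second gap has ≥ 2 vertices). -/
lemma iso_lemma (hreg : G.IsRegularOfDegree 4)
    {S1 S2 S3 : Finset (Fin n)} (h1 : good G u v S1) (h2 : good G u v S2) (h3 : good G u v S3)
    (hs12 : S1 ⊆ S2) (hs23 : S2 ⊆ S3)
    (hb12 : bd G S1 ∩ bd G S2 = ∅) (hb23 : bd G S2 ∩ bd G S3 = ∅)
    (hone : (S2 \ S1).card = 1) : 2 ≤ (S3 \ S2).card := by
  classical
  obtain ⟨x, hxeq⟩ := Finset.card_eq_one.1 hone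
  have hbd4 : (bd G {x}).card = 4 := card_bd_singleton hreg x
  have hsub : bd G {x} ⊆ bd G S2 ∪ bd G S1 := hxeq ▸ bd_sdiff_subset S2 S1
  have hdisj : Disjoint (bd G S2) (bd G S1) := by
    rw [Finset.disjoint_iff_inter_eq_empty, Finset.inter_comm]
    exact hb12
  have hcard : (bd G S2 ∪ bd G S1).card = 4 := by
    rw [Finset.card_union_of_disjoint hdisj, h1.two, h2.two]
  have heq : bd G {x} = bd G S2 ∪ bd G S1 :=
    Finset.eq_of_subset_of_card_le hsub (by omega)
  have hsub2 : bd G S2 ⊆ bd G {x} := by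
    rw [heq]; exact Finset.subset_union_left
  obtain ⟨e1, e2, hne, hbdeq⟩ := Finset.card_eq_two.1 h2.two
  have hxS2 : x ∈ S2 := by
    have : x ∈ S2 \ S1 := by rw [hxeq]; exact Finset.mem_singleton_self x
    exact (Finset.mem_sdiff.1 this).1
  -- both edges of bd S2 are incident to x, with far ends in S3 \ S2
  have key : ∀ e ∈ bd G S2, ∃ y, G.Adj x y ∧ e = s(x, y) ∧ y ∈ S3 \ S2 := by
    intro e he
    obtain ⟨y, hadj, rfl⟩ := x_mem_of_mem_bd_singleton_aux (hsub2 he)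
    have hyS2 : y ∉ S2 := by
      rcases (mem_bd_mk.1 he).2 with ⟨_, hh⟩ | ⟨hh1, hh2⟩
      · exact hh
      · exact absurd hxS2 hh2
    have hnot3 : s(x, y) ∉ bd G S3 := by
      intro hmem
      have : s(x, y) ∈ bd G S2 ∩ bd G S3 := Finset.mem_inter.2 ⟨he, hmem⟩
      rw [hb23] at this
      exact absurd this (Finset.notMem_empty _)
    have hyS3 : y ∈ S3 := not_cross_in hadj hnot3 (hs23 hxS2)
    exact ⟨y, hadj, rfl, Finset.mem_sdiff.2 ⟨hyS3, hyS2⟩⟩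
  obtain ⟨y1, hadj1, he1, hy1⟩ := key e1 (by rw [hbdeq]; simp)
  obtain ⟨y2, hadj2, he2, hy2⟩ := key e2 (by rw [hbdeq]; simp)
  have hy12 : y1 ≠ y2 := by
    rintro rfl
    exact hne (he1.trans he2.symm)
  exact Finset.one_lt_card.2 ⟨y1, hy1, y2, hy2, hy12⟩

/- ### chain machinery -/

lemma chain_enum : ∀ (m : ℕ) (C : Finset (Finset (Fin n))), C.card = m →
    (∀ S ∈ C, ∀ T ∈ C, S ⊆ T ∨ T ⊆ S) →
    ∃ c : ℕ → Finset (Fin n), (∀ i < m, c i ∈ C) ∧ (∀ S ∈ C, ∃ i < m, c i = S) ∧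
      (∀ i j, i < j → j < m → c i ⊂ c j) := by
  intro m
  induction m with
  | zero =>
      intro C hC _
      exact ⟨fun _ => ∅, by omega, by
        intro S hS
        rw [Finset.card_eq_zero.1 hC] at hS
        exact absurd hS (Finset.notMem_empty _), by omega⟩
  | succ m ih =>
      intro C hC hcomp
      have hne : C.Nonempty := Finset.card_pos.1 (by omega)
      obtain ⟨S0, hS0, hmin⟩ := Finset.exists_min_image C Finset.card hne
      have hS0sub : ∀ T ∈ C, S0 ⊆ T := by
        intro T hT
        rcases hcomp S0 hS0 T hT with h | h
        · exact h
        · rw [Finset.eq_of_subset_of_card_le h (hmin T hT)]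
      set C' := C.erase S0 with hC'
      have hC'card : C'.card = m := by
        rw [hC', Finset.card_erase_of_mem hS0, hC]
        omega
      obtain ⟨c', hmem', hsurj', hmono'⟩ := ih C' hC'card
        (fun S hS T hT => hcomp S (Finset.mem_of_mem_erase hS) T (Finset.mem_of_mem_erase hT))
      refine ⟨fun i => if i = 0 then S0 else c' (i - 1), ?_, ?_, ?_⟩
      · intro i hi
        by_cases h : i = 0
        · simpa [h] using hS0
        · simp only [h, if_false]
          exact Finset.mem_of_mem_erase (hmem' (i - 1) (by omega))
      · intro S hS
        by_cases h : S = S0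
        · exact ⟨0, by omega, by simp [h.symm]⟩
        · obtain ⟨i, hi, hie⟩ := hsurj' S (Finset.mem_erase.2 ⟨h, hS⟩)
          exact ⟨i + 1, by omega, by simpa using hie⟩
      · intro i j hij hj
        have hj0 : j ≠ 0 := by omega
        simp only [hj0, if_false]
        by_cases h : i = 0
        · simp only [h, if_true]
          have hmem : c' (j - 1) ∈ C' := hmem' (j - 1) (by omega)
          refine Finset.ssubset_iff_subset_ne.2 ⟨hS0sub _ (Finset.mem_of_mem_erase hmem), ?_⟩
          exact fun h' => (Finset.mem_erase.1 hmem).1 h'.symm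
        · simp only [h, if_false]
          exact hmono' (i - 1) (j - 1) (by omega) (by omega)

section Chain

variable {r : ℕ} {c : ℕ → Finset (Fin n)}
variable (hreg : G.IsRegularOfDegree 4) (hreach : G.Reachable u v)
variable (hgood : ∀ i < r, good G u v (c i))
variable (hmono : ∀ i j, i < j → j < r → c i ⊂ c j)
variable (hmax : ∀ T, good G u v T → (∀ i < r, T ⊆ c i ∨ c i ⊆ T) → ∃ i < r, T = c i)

include hmono in
lemma cmono : ∀ {i j : ℕ}, i ≤ j → j < r → c i ⊆ c j := by
  intro i j hij hj
  rcases eq_or_lt_of_le hij with rfl | h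
  · exact subset_rfl
  · exact (hmono i j h hj).subset

/-- positions of an edge on the chain -/
noncomputable def posSet (G : SimpleGraph (Fin n)) (c : ℕ → Finset (Fin n)) (r : ℕ)
    (e : Sym2 (Fin n)) : Finset ℕ :=
  (Finset.range r).filter (fun i => e ∈ bd G (c i))

lemma mem_posSet {G : SimpleGraph (Fin n)} {c : ℕ → Finset (Fin n)} {r : ℕ}
    {e : Sym2 (Fin n)} {i : ℕ} :
    i ∈ posSet G c r e ↔ i < r ∧ e ∈ bd G (c i) := by
  simp [posSet]

include hmono in
lemma interval_prop {e : Sym2 (Fin n)} {i j k : ℕ} (hi : e ∈ bd G (c i)) (hk : e ∈ bd G (c k))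
    (hij : i ≤ j) (hjk : j ≤ k) (hkr : k < r) : e ∈ bd G (c j) := by
  rw [mem_bd] at hi
  obtain ⟨hE, x, y, hx, hy, rfl⟩ := hi
  have hxj : x ∈ c j := cmono hmono hij (by omega) hx
  have hyk : y ∉ c k := by
    rcases (mem_bd_mk.1 hk).2 with ⟨_, h2⟩ | ⟨h1, h2⟩
    · exact h2
    · exact absurd (cmono hmono (le_trans hij hjk) hkr hx) h2
  have hyj : y ∉ c j := fun h => hyk (cmono hmono hjk hkr h)
  exact mem_bd_mk.2 ⟨G.mem_edgeSet.1 hE, Or.inl ⟨hxj, hyj⟩⟩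

/-- the set of chain indices incomparable with `T` -/
noncomputable def incX (c : ℕ → Finset (Fin n)) (r : ℕ) (T : Finset (Fin n)) : Finset ℕ :=
  (Finset.range r).filter (fun i => ¬(T ⊆ c i ∨ c i ⊆ T))

lemma mem_incX {c : ℕ → Finset (Fin n)} {r : ℕ} {T : Finset (Fin n)} {i : ℕ} :
    i ∈ incX c r T ↔ i < r ∧ ¬(T ⊆ c i ∨ c i ⊆ T) := by
  simp [incX]

include hreg hreach hgood hmono hmax in
lemma covering_aux : ∀ (m : ℕ) (T : Finset (Fin n)), good G u v T →
    (incX c r T).card ≤ m → ∀ e ∈ bd G T, ∃ i, i < r ∧ e ∈ bd G (c i) := by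
  intro m
  induction m with
  | zero =>
      intro T hT hX e he
      have hempty : incX c r T = ∅ := Finset.card_eq_zero.1 (by omega)
      have hcomp : ∀ i < r, T ⊆ c i ∨ c i ⊆ T := by
        intro i hi
        by_contra h
        have : i ∈ incX c r T := mem_incX.2 ⟨hi, h⟩
        rw [hempty] at this
        exact absurd this (Finset.notMem_empty _)
      obtain ⟨i, hi, rfl⟩ := hmax T hT hcomp
      exact ⟨i, hi, he⟩
  | succ m ih =>
      intro T hT hX e he
      by_cases h0 : (incX c r T).card = 0
      · exact ih T hT (by omega) e he
      · have hpos : 0 < (incX c r T).card := by omega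
        obtain ⟨k, hk⟩ := Finset.card_pos.1 hpos
        obtain ⟨hkr, hknc⟩ := mem_incX.1 hk
        by_cases hek : e ∈ bd G (c k)
        · exact ⟨k, hkr, hek⟩
        have hnc1 : ¬(T ⊆ c k) := fun h => hknc (Or.inl h)
        have hnc2 : ¬(c k ⊆ T) := fun h => hknc (Or.inr h)
        have hck : good G u v (c k) := hgood k hkr
        obtain ⟨hgI, hgU⟩ := uncross hreg hreach hT hck hnc1 hnc2
        rw [mem_bd] at he
        obtain ⟨hE, x, y, hx, hy, rfl⟩ := he
        have hadj : G.Adj x y := G.mem_edgeSet.1 hE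
        by_cases hxk : x ∈ c k
        · -- use T ∩ c k
          have hyk : y ∈ c k := not_cross_in hadj hek hxk
          set T' := T ∩ c k with hT'
          have heT' : s(x, y) ∈ bd G T' :=
            mem_bd_mk.2 ⟨hadj, Or.inl ⟨Finset.mem_inter.2 ⟨hx, hxk⟩, fun h => hy (Finset.mem_inter.1 h).1⟩⟩
          have hXsub : incX c r T' ⊆ (incX c r T).erase k := by
            intro j hj
            obtain ⟨hjr, hjnc⟩ := mem_incX.1 hj
            rw [Finset.mem_erase]
            constructor
            · rintro rfl
              exact hjnc (Or.inl Finset.inter_subset_right)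
            · refine mem_incX.2 ⟨hjr, fun hcomp => hjnc ?_⟩
              rcases hcomp with h | h
              · exact Or.inl (le_trans Finset.inter_subset_left h)
              · rcases eq_or_ne j k with rfl | hjk
                · exact Or.inl Finset.inter_subset_right
                rcases lt_or_gt_of_ne hjk with hlt | hgt
                · exact Or.inr (Finset.subset_inter h (cmono hmono (le_of_lt hlt) hkr))
                · exact Or.inl (le_trans Finset.inter_subset_right (cmono hmono (le_of_lt hgt) hjr))
          have hXcard : (incX c r T').card ≤ m := by
            have h1 : (incX c r T').card ≤ ((incX c r T).erase k).card := Finset.card_le_card hXsub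
            have hkmem : k ∈ incX c r T := mem_incX.2 ⟨hkr, hknc⟩
            rw [Finset.card_erase_of_mem hkmem] at h1
            omega
          exact ih T' hgI hXcard _ heT'
        · -- use T ∪ c k
          have hyk : y ∉ c k := by
            intro hyk
            exact hek (mem_bd_mk.2 ⟨hadj, Or.inr ⟨hyk, hxk⟩⟩)
          set T' := T ∪ c k with hT'
          have heT' : s(x, y) ∈ bd G T' :=
            mem_bd_mk.2 ⟨hadj, Or.inl ⟨Finset.mem_union.2 (Or.inl hx),
              fun h => (Finset.mem_union.1 h).elim hy hyk⟩⟩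
          have hXsub : incX c r T' ⊆ (incX c r T).erase k := by
            intro j hj
            obtain ⟨hjr, hjnc⟩ := mem_incX.1 hj
            rw [Finset.mem_erase]
            constructor
            · rintro rfl
              exact hjnc (Or.inr Finset.subset_union_right)
            · refine mem_incX.2 ⟨hjr, fun hcomp => hjnc ?_⟩
              rcases hcomp with h | h
              · rcases eq_or_ne j k with rfl | hjk
                · exact Or.inr Finset.subset_union_right
                rcases lt_or_gt_of_ne hjk with hlt | hgt
                · exact Or.inr (le_trans (cmono hmono (le_of_lt hlt) hkr) Finset.subset_union_right)
                · exact Or.inl (Finset.union_subset h (cmono hmono (le_of_lt hgt) hjr))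
              · exact Or.inr (le_trans h Finset.subset_union_left)
          have hXcard : (incX c r T').card ≤ m := by
            have h1 : (incX c r T').card ≤ ((incX c r T).erase k).card := Finset.card_le_card hXsub
            have hkmem : k ∈ incX c r T := mem_incX.2 ⟨hkr, hknc⟩
            rw [Finset.card_erase_of_mem hkmem] at h1
            omega
          exact ih T' hgU hXcard _ heT'

include hreg hreach hgood hmono hmax in
lemma covering {T : Finset (Fin n)} (hT : good G u v T) {e : Sym2 (Fin n)} (he : e ∈ bd G T) :
    (posSet G c r e).Nonempty := by
  obtain ⟨i, hi, hie⟩ := covering_aux hreg hreach hgood hmono hmax (incX c r T).card T hT le_rfl e he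
  exact ⟨i, mem_posSet.2 ⟨hi, hie⟩⟩

end Chain

lemma not_cross_in' {G : SimpleGraph (Fin n)} {S : Finset (Fin n)} {x y : Fin n}
    (hadj : G.Adj x y) (h : s(x, y) ∉ bd G S) (hy : y ∈ S) : x ∈ S := by
  apply not_cross_in hadj.symm _ hy
  rwa [Sym2.eq_swap]

/- ### intervals of positions -/

noncomputable def loE (G : SimpleGraph (Fin n)) (c : ℕ → Finset (Fin n)) (r : ℕ)
    (e : Sym2 (Fin n)) : ℕ := sInf {i | i ∈ posSet G c r e}

noncomputable def hiE (G : SimpleGraph (Fin n)) (c : ℕ → Finset (Fin n)) (r : ℕ)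
    (e : Sym2 (Fin n)) : ℕ := sSup {i | i ∈ posSet G c r e}

section Chain2

variable {r : ℕ} {c : ℕ → Finset (Fin n)}
variable (hreg : G.IsRegularOfDegree 4) (hreach : G.Reachable u v)
variable (hgood : ∀ i < r, good G u v (c i))
variable (hmono : ∀ i j, i < j → j < r → c i ⊂ c j)
variable (hmax : ∀ T, good G u v T → (∀ i < r, T ⊆ c i ∨ c i ⊆ T) → ∃ i < r, T = c i)

lemma posSet_coe_ne {e : Sym2 (Fin n)} (h : (posSet G c r e).Nonempty) :
    {i | i ∈ posSet G c r e}.Nonempty := by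
  obtain ⟨i, hi⟩ := h
  exact ⟨i, hi⟩

lemma posSet_bdd (e : Sym2 (Fin n)) : BddAbove {i | i ∈ posSet G c r e} :=
  (Set.Finite.ofFinset (posSet G c r e) (fun _ => Iff.rfl)).bddAbove

lemma loE_mem {e : Sym2 (Fin n)} (h : (posSet G c r e).Nonempty) :
    loE G c r e ∈ posSet G c r e := by
  have := Nat.sInf_mem (posSet_coe_ne h)
  exact this

lemma hiE_mem {e : Sym2 (Fin n)} (h : (posSet G c r e).Nonempty) :
    hiE G c r e ∈ posSet G c r e := by
  have := Nat.sSup_mem (posSet_coe_ne h) (posSet_bdd e)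
  exact this

lemma loE_le {e : Sym2 (Fin n)} {i : ℕ} (h : i ∈ posSet G c r e) : loE G c r e ≤ i :=
  Nat.sInf_le (show i ∈ {j | j ∈ posSet G c r e} from h)

lemma le_hiE {e : Sym2 (Fin n)} {i : ℕ} (h : i ∈ posSet G c r e) : i ≤ hiE G c r e :=
  le_csSup (posSet_bdd e) (show i ∈ {j | j ∈ posSet G c r e} from h)

include hreg hreach hgood hmono hmax in
/-- **Key lemma**: between the position-intervals of the two boundary edges of a good
set, all consecutive chain sets share a boundary edge. -/
lemma key_aux : ∀ (μ : ℕ) (T : Finset (Fin n)) (e f : Sym2 (Fin n)), good G u v T →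
    bd G T = {e, f} → (posSet G c r e).Nonempty → (posSet G c r f).Nonempty →
    hiE G c r e < loE G c r f → loE G c r f - hiE G c r e ≤ μ →
    ∀ j, hiE G c r e ≤ j → j < loE G c r f →
      (bd G (c j) ∩ bd G (c (j + 1))).Nonempty := by
  intro μ
  induction μ using Nat.strong_induction_on with
  | _ μ IH =>
    intro T e f hT hbd hePos hfPos horder hmu j hja hjb
    have he_mem : e ∈ bd G T := by rw [hbd]; exact Finset.mem_insert_self e {f}
    have hf_mem : f ∈ bd G T := by
      rw [hbd]; exact Finset.mem_insert_of_mem (Finset.mem_singleton_self f)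
    obtain ⟨hEe, x, y, hxT, hyT, heq⟩ := mem_bd.1 he_mem
    obtain ⟨hEf, p, q, hpT, hqT, hfeq⟩ := mem_bd.1 hf_mem
    subst heq
    subst hfeq
    have hadjE : G.Adj x y := G.mem_edgeSet.1 hEe
    have hadjF : G.Adj p q := G.mem_edgeSet.1 hEf
    set a2 := hiE G c r s(x, y) with ha2def
    set b1 := loE G c r s(p, q) with hb1def
    have ha2 : a2 ∈ posSet G c r s(x, y) := hiE_mem hePos
    have hb1 : b1 ∈ posSet G c r s(p, q) := loE_mem hfPos
    obtain ⟨ha2r, ha2bd⟩ := mem_posSet.1 ha2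
    obtain ⟨hb1r, hb1bd⟩ := mem_posSet.1 hb1
    have hnotE : ∀ i, a2 < i → i < r → s(x, y) ∉ bd G (c i) := by
      intro i hi hir hmem
      have := le_hiE (e := s(x, y)) (c := c) (mem_posSet.2 ⟨hir, hmem⟩)
      omega
    have hnotF : ∀ i, i < b1 → i < r → s(p, q) ∉ bd G (c i) := by
      intro i hi hir hmem
      have := loE_le (e := s(p, q)) (c := c) (mem_posSet.2 ⟨hir, hmem⟩)
      omega
    have hgooda2 : good G u v (c a2) := hgood a2 ha2r
    have hgoodb1 : good G u v (c b1) := hgood b1 hb1r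
    -- step 1 : c a2 ⊊ T
    have h1 : c a2 ⊂ T := by
      have hne : c a2 ≠ T := by
        rintro hcaeq
        have : s(p, q) ∈ bd G (c a2) := by rw [hcaeq]; exact hf_mem
        exact hnotF a2 (by omega) ha2r this
      rcases nested_of_shared hreg hreach hgooda2 hT ha2bd he_mem with h | h
      · exact Finset.ssubset_iff_subset_ne.2 ⟨h, hne⟩
      · exfalso
        have hj1r : b1 - 1 < r := by omega
        have hpj : p ∈ c (b1 - 1) :=
          cmono hmono (by omega : a2 ≤ b1 - 1) hj1r (h hpT)
        have hfnot : s(p, q) ∉ bd G (c (b1 - 1)) := hnotF (b1 - 1) (by omega) hj1r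
        have hqj : q ∈ c (b1 - 1) := not_cross_in hadjF hfnot hpj
        have hpb : p ∈ c b1 := cmono hmono (by omega) hb1r hpj
        have hqb : q ∈ c b1 := cmono hmono (by omega) hb1r hqj
        exact not_cross_of_both_in hpb hqb hb1bd
    -- step 2 : T ⊊ c b1
    have h2 : T ⊂ c b1 := by
      have hne : T ≠ c b1 := by
        rintro hcbeq
        have : s(x, y) ∈ bd G (c b1) := by rw [← hcbeq]; exact he_mem
        exact hnotE b1 (by omega) hb1r this
      rcases nested_of_shared hreg hreach hT hgoodb1 hf_mem hb1bd with h | h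
      · exact Finset.ssubset_iff_subset_ne.2 ⟨h, hne⟩
      · exfalso
        have ha21r : a2 + 1 < r := by omega
        have henot : s(x, y) ∉ bd G (c (a2 + 1)) := hnotE (a2 + 1) (by omega) ha21r
        have hyT' : y ∈ c (a2 + 1) := by
          rcases (mem_bd_mk.1 ha2bd).2 with ⟨hxa, _⟩ | ⟨hya, _⟩
          · exact not_cross_in hadjE henot (cmono hmono (by omega) ha21r hxa)
          · exact cmono hmono (by omega) ha21r hya
        exact hyT (h (cmono hmono (by omega) hb1r hyT'))
    -- step 3 : there is a crossing index strictly between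
    have h3 : ∃ k, a2 < k ∧ k < b1 ∧ ¬(T ⊆ c k ∨ c k ⊆ T) := by
      by_contra hno
      push_neg at hno
      have hcomp : ∀ i, i < r → T ⊆ c i ∨ c i ⊆ T := by
        intro i hir
        by_cases hia : i ≤ a2
        · exact Or.inr (le_trans (cmono hmono hia ha2r) h1.subset)
        · by_cases hib : b1 ≤ i
          · exact Or.inl (le_trans h2.subset (cmono hmono hib hir))
          · exact hno i (by omega) (by omega)
      obtain ⟨i0, hi0r, hi0eq⟩ := hmax T hT (fun i hi => hcomp i hi)
      have hle : i0 ≤ a2 := le_hiE (mem_posSet.2 ⟨hi0r, by rw [← hi0eq]; exact he_mem⟩)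
      have hge : b1 ≤ i0 := loE_le (mem_posSet.2 ⟨hi0r, by rw [← hi0eq]; exact hf_mem⟩)
      omega
    obtain ⟨k, hka, hkb, hknc⟩ := h3
    have hkr : k < r := by omega
    have hnc1 : ¬T ⊆ c k := fun h => hknc (Or.inl h)
    have hnc2 : ¬c k ⊆ T := fun h => hknc (Or.inr h)
    have hgoodk : good G u v (c k) := hgood k hkr
    obtain ⟨hgY, hgZ⟩ := uncross hreg hreach hT hgoodk hnc1 hnc2
    -- e ∈ bd Y, e ∉ bd Z
    have hxa2 : x ∈ c a2 := by
      rcases (mem_bd_mk.1 ha2bd).2 with ⟨hxa, _⟩ | ⟨hya, _⟩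
      · exact hxa
      · exact absurd (h1.subset hya) hyT
    have hxk : x ∈ c k := cmono hmono (by omega) hkr hxa2
    have henotk : s(x, y) ∉ bd G (c k) := hnotE k (by omega) hkr
    have hyk : y ∈ c k := not_cross_in hadjE henotk hxk
    have heY : s(x, y) ∈ bd G (T ∩ c k) :=
      mem_bd_mk.2 ⟨hadjE, Or.inl ⟨Finset.mem_inter.2 ⟨hxT, hxk⟩,
        fun hh => hyT (Finset.mem_inter.1 hh).1⟩⟩
    have heZnot : s(x, y) ∉ bd G (T ∪ c k) :=
      not_cross_of_both_in (Finset.mem_union.2 (Or.inl hxT)) (Finset.mem_union.2 (Or.inr hyk))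
    -- f ∈ bd Z, f ∉ bd Y
    have hfnotk : s(p, q) ∉ bd G (c k) := hnotF k hkb hkr
    have hq_k : q ∉ c k := by
      intro hqk
      have hpk : p ∈ c k := not_cross_in' hadjF hfnotk hqk
      have hfZnot : s(p, q) ∉ bd G (T ∪ c k) :=
        not_cross_of_both_in (Finset.mem_union.2 (Or.inl hpT)) (Finset.mem_union.2 (Or.inr hqk))
      have hsub : bd G (T ∪ c k) ⊆ bd G (c k) := by
        intro g hg
        rcases Finset.mem_union.1 (bd_union_subset T (c k) hg) with hgT | hgk
        · rw [hbd] at hgT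
          rcases Finset.mem_insert.1 hgT with rfl | hgf
          · exact absurd hg heZnot
          · rw [Finset.mem_singleton.1 hgf] at hg
            exact absurd hg hfZnot
        · exact hgk
      have heq2 : bd G (T ∪ c k) = bd G (c k) :=
        Finset.eq_of_subset_of_card_le hsub (by rw [hgZ.two, hgoodk.two])
      have : T ∪ c k = c k := good.bd_inj hgZ hgoodk heq2
      exact hnc1 (by rw [← this]; exact Finset.subset_union_left)
    have hp_k : p ∉ c k := not_cross_out hadjF hfnotk hq_k
    have hfZ : s(p, q) ∈ bd G (T ∪ c k) :=
      mem_bd_mk.2 ⟨hadjF, Or.inl ⟨Finset.mem_union.2 (Or.inl hpT),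
        fun hh => (Finset.mem_union.1 hh).elim hqT hq_k⟩⟩
    have hfYnot : s(p, q) ∉ bd G (T ∩ c k) :=
      not_cross_of_both_out (fun hh => hp_k (Finset.mem_inter.1 hh).2)
        (fun hh => hqT (Finset.mem_inter.1 hh).1)
    -- extract the second edges β, β'
    have hbdY : ∃ β, bd G (T ∩ c k) = {s(x, y), β} ∧ β ∈ bd G (c k) := by
      obtain ⟨g1, g2, hg12, hYpair⟩ := Finset.card_eq_two.1 hgY.two
      have heY' : s(x, y) ∈ ({g1, g2} : Finset (Sym2 (Fin n))) := by rw [← hYpair]; exact heY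
      have hother : ∀ g, g ∈ bd G (T ∩ c k) → g ≠ s(x, y) → g ∈ bd G (c k) := by
        intro g hg hgne
        rcases Finset.mem_union.1 (bd_inter_subset T (c k) hg) with hgT | hgk
        · rw [hbd] at hgT
          rcases Finset.mem_insert.1 hgT with rfl | hgf
          · exact absurd rfl hgne
          · rw [Finset.mem_singleton.1 hgf] at hg
            exact absurd hg hfYnot
        · exact hgk
      rcases Finset.mem_insert.1 heY' with rfl | hg2
      · refine ⟨g2, hYpair, hother g2 (by rw [hYpair]; simp) (Ne.symm hg12)⟩
      · have hg2e : g2 = s(x, y) := (Finset.mem_singleton.1 hg2).symm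
        subst hg2e
        refine ⟨g1, by rw [hYpair, Finset.pair_comm], hother g1 (by rw [hYpair]; simp) hg12⟩
    have hbdZ : ∃ β', bd G (T ∪ c k) = {β', s(p, q)} ∧ β' ∈ bd G (c k) := by
      obtain ⟨g1, g2, hg12, hZpair⟩ := Finset.card_eq_two.1 hgZ.two
      have hfZ' : s(p, q) ∈ ({g1, g2} : Finset (Sym2 (Fin n))) := by rw [← hZpair]; exact hfZ
      have hother : ∀ g, g ∈ bd G (T ∪ c k) → g ≠ s(p, q) → g ∈ bd G (c k) := by
        intro g hg hgne
        rcases Finset.mem_union.1 (bd_union_subset T (c k) hg) with hgT | hgk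
        · rw [hbd] at hgT
          rcases Finset.mem_insert.1 hgT with rfl | hgf
          · exact absurd hg heZnot
          · exact absurd (Finset.mem_singleton.1 hgf) hgne
        · exact hgk
      rcases Finset.mem_insert.1 hfZ' with rfl | hg2
      · refine ⟨g2, by rw [hZpair, Finset.pair_comm], hother g2 (by rw [hZpair]; simp) (Ne.symm hg12)⟩
      · have hg2e : g2 = s(p, q) := (Finset.mem_singleton.1 hg2).symm
        subst hg2e
        refine ⟨g1, hZpair, hother g1 (by rw [hZpair]; simp) hg12⟩
    obtain ⟨β, hYeq, hβk⟩ := hbdY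
    obtain ⟨β', hZeq, hβ'k⟩ := hbdZ
    have hβPos : (posSet G c r β).Nonempty := ⟨k, mem_posSet.2 ⟨hkr, hβk⟩⟩
    have hβ'Pos : (posSet G c r β').Nonempty := ⟨k, mem_posSet.2 ⟨hkr, hβ'k⟩⟩
    have hC1k : loE G c r β ≤ k := loE_le (mem_posSet.2 ⟨hkr, hβk⟩)
    have hkC2 : k ≤ hiE G c r β := le_hiE (mem_posSet.2 ⟨hkr, hβk⟩)
    have hD1k : loE G c r β' ≤ k := loE_le (mem_posSet.2 ⟨hkr, hβ'k⟩)
    have hkD2 : k ≤ hiE G c r β' := le_hiE (mem_posSet.2 ⟨hkr, hβ'k⟩)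
    obtain ⟨hC2r, hβC2⟩ := mem_posSet.1 (hiE_mem hβPos)
    obtain ⟨hC1r, hβC1⟩ := mem_posSet.1 (loE_mem hβPos)
    obtain ⟨hD2r, hβ'D2⟩ := mem_posSet.1 (hiE_mem hβ'Pos)
    obtain ⟨hD1r, hβ'D1⟩ := mem_posSet.1 (loE_mem hβ'Pos)
    -- final case split on j
    by_cases hcase1 : loE G c r β ≤ j ∧ j + 1 ≤ hiE G c r β
    · refine ⟨β, Finset.mem_inter.2 ⟨?_, ?_⟩⟩
      · exact interval_prop hmono hβC1 hβC2 hcase1.1 (by omega) hC2r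
      · exact interval_prop hmono hβC1 hβC2 (by omega) hcase1.2 hC2r
    · by_cases hcase2 : hiE G c r β ≤ j
      · by_cases hcase3 : j + 1 ≤ hiE G c r β'
        · refine ⟨β', Finset.mem_inter.2 ⟨?_, ?_⟩⟩
          · exact interval_prop hmono hβ'D1 hβ'D2 (by omega) (by omega) hD2r
          · exact interval_prop hmono hβ'D1 hβ'D2 (by omega) hcase3 hD2r
        · -- j ≥ hiE β' : recurse on Z
          have hord : hiE G c r β' < loE G c r s(p, q) := by omega
          exact IH (b1 - hiE G c r β') (by omega) (T ∪ c k) β' s(p, q) hgZ hZeq hβ'Pos hfPos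
            hord (by omega) j (by omega) hjb
      · -- j < loE β : recurse on Y
        have hjC1 : j < loE G c r β := by omega
        have hord : hiE G c r s(x, y) < loE G c r β := by omega
        exact IH (loE G c r β - a2) (by omega) (T ∩ c k) s(x, y) β hgY hYeq hePos hβPos
          hord (by omega) j hja hjC1

end Chain2

/- ### path parity: every good set's boundary meets a fixed u-v path in exactly one edge -/

lemma trail_parity {G : SimpleGraph (Fin n)} (S : Finset (Fin n)) :
    ∀ {a b : Fin n} (w : G.Walk a b), w.IsTrail →
      (w.edges.toFinset ∩ bd G S).card % 2 = (if (a ∈ S) = (b ∈ S) then 0 else 1) := by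
  intro a b w
  induction w with
  | nil =>
      intro _
      simp
  | @cons a c b hadj w' ih =>
      intro htrail
      rw [SimpleGraph.Walk.isTrail_cons] at htrail
      have hred := ih htrail.1
      have hnotin : s(a, c) ∉ w'.edges.toFinset := by
        simpa using htrail.2
      have hins : (SimpleGraph.Walk.cons hadj w').edges.toFinset
          = insert s(a, c) w'.edges.toFinset := by
        simp [SimpleGraph.Walk.edges_cons]
      rw [hins]
      by_cases hmem : s(a, c) ∈ bd G S
      · have : (insert s(a, c) w'.edges.toFinset ∩ bd G S)
            = insert s(a, c) (w'.edges.toFinset ∩ bd G S) := by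
          rw [Finset.insert_inter_of_mem hmem]
        rw [this, Finset.card_insert_of_notMem (fun hx => hnotin (Finset.mem_inter.1 hx).1)]
        have hcr : ¬((a ∈ S) = (c ∈ S)) := by
          rcases (mem_bd_mk.1 hmem).2 with ⟨h1, h2⟩ | ⟨h1, h2⟩ <;> simp [h1, h2]
        by_cases haS : a ∈ S <;> by_cases hcS : c ∈ S <;> by_cases hbS : b ∈ S <;>
          simp [haS, hcS, hbS] at hcr hred ⊢ <;> omega
      · have : (insert s(a, c) w'.edges.toFinset ∩ bd G S)
            = w'.edges.toFinset ∩ bd G S := by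
          rw [Finset.insert_inter_of_notMem hmem]
        rw [this]
        have hcr : (a ∈ S) = (c ∈ S) := by
          by_contra hne
          apply hmem
          refine mem_bd_mk.2 ⟨hadj, ?_⟩
          by_cases haS : a ∈ S <;> by_cases hcS : c ∈ S <;> simp [haS, hcS] at hne ⊢
        by_cases haS : a ∈ S <;> by_cases hcS : c ∈ S <;> by_cases hbS : b ∈ S <;>
          simp [haS, hcS, hbS] at hcr hred ⊢ <;> omega

lemma exists_path_finset (hreach : G.Reachable u v) :
    ∃ Wf : Finset (Sym2 (Fin n)), ∀ T : Finset (Fin n), good G u v T →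
      (bd G T ∩ Wf).card = 1 := by
  obtain ⟨w⟩ := hreach
  set p := w.toPath with hp
  refine ⟨(p : G.Walk u v).edges.toFinset, ?_⟩
  intro T hT
  have hparity := trail_parity T (p : G.Walk u v) p.2.isTrail
  rw [if_neg (by simp [hT.uS, hT.vS])] at hparity
  have hle : ((p : G.Walk u v).edges.toFinset ∩ bd G T).card ≤ 2 := by
    calc ((p : G.Walk u v).edges.toFinset ∩ bd G T).card ≤ (bd G T).card :=
          Finset.card_le_card Finset.inter_subset_right
      _ = 2 := hT.two
  rw [Finset.inter_comm]
  omega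

/- ### run indices -/

noncomputable def brkSet (G : SimpleGraph (Fin n)) (c : ℕ → Finset (Fin n)) (r : ℕ) : Finset ℕ :=
  (Finset.range (r - 1)).filter (fun k => bd G (c k) ∩ bd G (c (k + 1)) = ∅)

lemma mem_brkSet {c : ℕ → Finset (Fin n)} {r k : ℕ} :
    k ∈ brkSet G c r ↔ k < r - 1 ∧ bd G (c k) ∩ bd G (c (k + 1)) = ∅ := by
  simp [brkSet]

noncomputable def qq (G : SimpleGraph (Fin n)) (c : ℕ → Finset (Fin n)) (r : ℕ) (i : ℕ) : ℕ :=
  ((brkSet G c r).filter (fun k => k < i)).card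

lemma qq_mono {c : ℕ → Finset (Fin n)} {r : ℕ} {i j : ℕ} (hij : i ≤ j) :
    qq G c r i ≤ qq G c r j := by
  exact Finset.card_le_card
    (Finset.monotone_filter_right _ (fun k _ (hk : k < i) => lt_of_lt_of_le hk hij))

lemma qq_le {c : ℕ → Finset (Fin n)} {r i : ℕ} : qq G c r i ≤ (brkSet G c r).card :=
  Finset.card_le_card (Finset.filter_subset _ _)

lemma qq_succ {c : ℕ → Finset (Fin n)} {r k : ℕ} :
    qq G c r (k + 1) = qq G c r k + (if k ∈ brkSet G c r then 1 else 0) := by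
  classical
  have hsplit : (brkSet G c r).filter (fun x => x < k + 1)
      = (brkSet G c r).filter (fun x => x < k) ∪ (brkSet G c r).filter (fun x => x = k) := by
    ext x
    simp only [Finset.mem_filter, Finset.mem_union]
    constructor
    · rintro ⟨hx, hlt⟩
      rcases Nat.lt_succ_iff_lt_or_eq.1 hlt with h | h
      · exact Or.inl ⟨hx, h⟩
      · exact Or.inr ⟨hx, h⟩
    · rintro (⟨hx, h⟩ | ⟨hx, h⟩) <;> exact ⟨hx, by omega⟩
  have hdisj : Disjoint ((brkSet G c r).filter (fun x => x < k))
      ((brkSet G c r).filter (fun x => x = k)) := by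
    rw [Finset.disjoint_left]
    intro x hx hx'
    rw [Finset.mem_filter] at hx hx'
    omega
  rw [qq, hsplit, Finset.card_union_of_disjoint hdisj]
  congr 1
  by_cases hk : k ∈ brkSet G c r
  · simp [Finset.filter_eq', hk]
  · simp [Finset.filter_eq', hk]

lemma qq_zero {c : ℕ → Finset (Fin n)} {r : ℕ} : qq G c r 0 = 0 := by
  rw [qq]
  convert Finset.card_empty
  ext x
  simp

lemma qq_eq_of_no_brk {c : ℕ → Finset (Fin n)} {r : ℕ} :
    ∀ (i j : ℕ), i ≤ j → (∀ k, i ≤ k → k < j → k ∉ brkSet G c r) →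
      qq G c r i = qq G c r j := by
  intro i j
  induction j with
  | zero =>
      intro h _
      have : i = 0 := by omega
      rw [this]
  | succ j ihj =>
      intro hij hk
      rcases Nat.lt_succ_iff_lt_or_eq.1 (Nat.lt_succ_of_le hij) with h | h
      · have h1 : i ≤ j := by omega
        rw [ihj h1 (fun k h2 h3 => hk k h2 (by omega)), qq_succ,
          if_neg (hk j h1 (by omega)), Nat.add_zero]
      · rw [h]

section Chain3

variable {r : ℕ} {c : ℕ → Finset (Fin n)}
variable (hreg : G.IsRegularOfDegree 4) (hreach : G.Reachable u v)
variable (hgood : ∀ i < r, good G u v (c i))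
variable (hmono : ∀ i j, i < j → j < r → c i ⊂ c j)
variable (hmax : ∀ T, good G u v T → (∀ i < r, T ⊆ c i ∨ c i ⊆ T) → ∃ i < r, T = c i)

include hmono in
lemma qq_pos_const_le {e : Sym2 (Fin n)} {i j : ℕ} (hi : i ∈ posSet G c r e)
    (hj : j ∈ posSet G c r e) (hij : i ≤ j) : qq G c r i = qq G c r j := by
  obtain ⟨hir, hibd⟩ := mem_posSet.1 hi
  obtain ⟨hjr, hjbd⟩ := mem_posSet.1 hj
  apply qq_eq_of_no_brk i j hij
  intro k hk1 hk2 hbrk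
  have h1 : e ∈ bd G (c k) := interval_prop hmono hibd hjbd hk1 (by omega) hjr
  have h2 : e ∈ bd G (c (k + 1)) := interval_prop hmono hibd hjbd (by omega) (by omega) hjr
  have : e ∈ bd G (c k) ∩ bd G (c (k + 1)) := Finset.mem_inter.2 ⟨h1, h2⟩
  rw [(mem_brkSet.1 hbrk).2] at this
  exact absurd this (Finset.notMem_empty _)

include hmono in
lemma qq_pos_const {e : Sym2 (Fin n)} {i j : ℕ} (hi : i ∈ posSet G c r e)
    (hj : j ∈ posSet G c r e) : qq G c r i = qq G c r j := by
  rcases le_total i j with h | h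
  · exact qq_pos_const_le hmono hi hj h
  · exact (qq_pos_const_le hmono hj hi h).symm

include hreg hreach hgood hmono hmax in
lemma same_run_ord {T : Finset (Fin n)} {e f : Sym2 (Fin n)} (hT : good G u v T)
    (hbd : bd G T = {e, f}) (hePos : (posSet G c r e).Nonempty)
    (hfPos : (posSet G c r f).Nonempty) (hord : hiE G c r e < loE G c r f) :
    qq G c r (loE G c r e) = qq G c r (loE G c r f) := by
  have hkey := key_aux hreg hreach hgood hmono hmax (loE G c r f - hiE G c r e) T e f hT hbd
    hePos hfPos hord le_rfl
  have h1 : qq G c r (hiE G c r e) = qq G c r (loE G c r f) := by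
    apply qq_eq_of_no_brk _ _ (by omega)
    intro k hk1 hk2 hbrk
    obtain ⟨g, hg⟩ := hkey k hk1 hk2
    rw [(mem_brkSet.1 hbrk).2] at hg
    exact absurd hg (Finset.notMem_empty _)
  rw [← h1]
  exact qq_pos_const hmono (loE_mem hePos) (hiE_mem hePos)

include hreg hreach hgood hmono hmax in
lemma same_run {T : Finset (Fin n)} {e f : Sym2 (Fin n)} (hT : good G u v T)
    (hbd : bd G T = {e, f}) :
    qq G c r (loE G c r e) = qq G c r (loE G c r f) := by
  have he_mem : e ∈ bd G T := by rw [hbd]; exact Finset.mem_insert_self e {f}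
  have hf_mem : f ∈ bd G T := by
    rw [hbd]; exact Finset.mem_insert_of_mem (Finset.mem_singleton_self f)
  have hePos : (posSet G c r e).Nonempty := covering hreg hreach hgood hmono hmax hT he_mem
  have hfPos : (posSet G c r f).Nonempty := covering hreg hreach hgood hmono hmax hT hf_mem
  by_cases hcomm : ∃ i, i ∈ posSet G c r e ∧ i ∈ posSet G c r f
  · obtain ⟨i, hie, hif⟩ := hcomm
    rw [qq_pos_const hmono (loE_mem hePos) hie, qq_pos_const hmono hif (loE_mem hfPos)]
  · have horder : hiE G c r e < loE G c r f ∨ hiE G c r f < loE G c r e := by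
      by_contra hno
      push_neg at hno
      obtain ⟨h1, h2⟩ := hno
      set m := max (loE G c r e) (loE G c r f) with hm
      obtain ⟨her, hebd⟩ := mem_posSet.1 (loE_mem hePos)
      obtain ⟨hfr, hfbd⟩ := mem_posSet.1 (loE_mem hfPos)
      obtain ⟨heR, heBD⟩ := mem_posSet.1 (hiE_mem hePos)
      obtain ⟨hfR, hfBD⟩ := mem_posSet.1 (hiE_mem hfPos)
      have hle : loE G c r e ≤ hiE G c r e := le_hiE (loE_mem hePos)
      have hlf : loE G c r f ≤ hiE G c r f := le_hiE (loE_mem hfPos)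
      have hme : e ∈ bd G (c m) := interval_prop hmono hebd heBD (le_max_left _ _) (by omega) heR
      have hmf : f ∈ bd G (c m) := interval_prop hmono hfbd hfBD (le_max_right _ _) (by omega) hfR
      exact hcomm ⟨m, mem_posSet.2 ⟨by omega, hme⟩, mem_posSet.2 ⟨by omega, hmf⟩⟩
    rcases horder with h | h
    · exact same_run_ord hreg hreach hgood hmono hmax hT hbd hePos hfPos h
    · have hbd' : bd G T = {f, e} := by rw [hbd, Finset.pair_comm]
      exact (same_run_ord hreg hreach hgood hmono hmax hT hbd' hfPos hePos h).symm

lemma qq_surj (hr : 0 < r) : ∀ j ≤ (brkSet G c r).card, ∃ i, i < r ∧ qq G c r i = j := by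
  have hend : qq G c r (r - 1) = (brkSet G c r).card := by
    rw [qq]
    congr 1
    apply Finset.filter_true_of_mem
    intro k hk
    exact (mem_brkSet.1 hk).1
  intro j hj
  set A := (Finset.range r).filter (fun i => j ≤ qq G c r i) with hA
  have hAne : A.Nonempty := ⟨r - 1, by
    rw [hA, Finset.mem_filter, Finset.mem_range]
    exact ⟨by omega, by omega⟩⟩
  set m := A.min' hAne with hm
  have hmA : m ∈ A := Finset.min'_mem _ _
  rw [hA, Finset.mem_filter, Finset.mem_range] at hmA
  obtain ⟨hmr, hmq⟩ := hmA
  rcases eq_or_lt_of_le hmq with h | h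
  · exact ⟨m, hmr, h.symm⟩
  · exfalso
    have hm0 : m ≠ 0 := by
      intro hm0
      rw [hm0, qq_zero] at h
      omega
    have hprev : qq G c r (m - 1) < j := by
      by_contra hge
      push_neg at hge
      have : m - 1 ∈ A := by
        rw [hA, Finset.mem_filter, Finset.mem_range]
        exact ⟨by omega, hge⟩
      have := Finset.min'_le A _ this
      omega
    have hstep : qq G c r m ≤ qq G c r (m - 1) + 1 := by
      have := qq_succ (G := G) (c := c) (r := r) (k := m - 1)
      rw [show m - 1 + 1 = m by omega] at this
      rw [this]
      split <;> omega
    omega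

end Chain3

/- ### arithmetic lemmas -/

lemma merge_sq : ∀ (t : ℕ) (g : ℕ → ℕ), 0 < t →
    (∑ j ∈ Finset.range t, (g j + 2) ^ 2) ≤ (∑ j ∈ Finset.range t, g j + 2) ^ 2 + 4 * (t - 1) := by
  intro t
  induction t with
  | zero => omega
  | succ t ih =>
      intro g _
      rcases Nat.eq_zero_or_pos t with rfl | ht
      · simp
      · rw [Finset.sum_range_succ, Finset.sum_range_succ, Nat.add_sub_cancel]
        have hIH := ih g ht
        have key : (∑ j ∈ Finset.range t, g j + 2) ^ 2 + (g t + 2) ^ 2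
            ≤ (∑ j ∈ Finset.range t, g j + g t + 2) ^ 2 + 4 := by
          nlinarith [Nat.zero_le ((∑ j ∈ Finset.range t, g j) * g t)]
        have h4 : 4 * (t - 1) + 4 = 4 * t := by omega
        linarith [hIH, key]

lemma no_consec {P : Finset ℕ} {m : ℕ} (hsub : P ⊆ Finset.range m)
    (hiso : ∀ k ∈ P, k + 1 ∉ P) : 2 * P.card ≤ m + 1 := by
  classical
  have hinj : (P.image (fun k => k + 1)).card = P.card :=
    Finset.card_image_of_injective _ (add_left_injective 1)
  have hdisj : Disjoint P (P.image (fun k => k + 1)) := by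
    rw [Finset.disjoint_right]
    intro a ha haP
    obtain ⟨b, hb, rfl⟩ := Finset.mem_image.1 ha
    exact hiso b hb haP
  have hsub2 : P ∪ P.image (fun k => k + 1) ⊆ Finset.range (m + 1) := by
    intro a ha
    rcases Finset.mem_union.1 ha with h | h
    · exact Finset.mem_range.2 (by have := Finset.mem_range.1 (hsub h); omega)
    · obtain ⟨b, hb, rfl⟩ := Finset.mem_image.1 h
      exact Finset.mem_range.2 (by have := Finset.mem_range.1 (hsub hb); omega)
  have := Finset.card_le_card hsub2
  rw [Finset.card_union_of_disjoint hdisj, hinj, Finset.card_range] at this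
  omega

lemma final_arith {A s2 s1 N nn : ℕ} (hcnt : 4 * N ≤ (A + 2) ^ 2 + 4 * (s2 + s1))
    (hb : 10 + 5 * A + 4 * s2 + s1 ≤ nn) (hiso : s1 ≤ A + s2 + 1) :
    60 * N ≤ nn ^ 2 := by
  have h60 : 15 * (4 * N) ≤ 15 * ((A + 2) ^ 2 + 4 * (s2 + s1)) := Nat.mul_le_mul_left 15 hcnt
  have hmain : 15 * ((A + 2) ^ 2 + 4 * (s2 + s1)) ≤ nn ^ 2 := by
    have hn2 : (10 + 5 * A + 4 * s2 + s1) ^ 2 ≤ nn ^ 2 := Nat.pow_le_pow_left hb 2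
    zify at hn2 hiso ⊢
    have hA : (0 : ℤ) ≤ (A : ℤ) := Int.natCast_nonneg A
    have hs2 : (0 : ℤ) ≤ (s2 : ℤ) := Int.natCast_nonneg s2
    have hs1 : (0 : ℤ) ≤ (s1 : ℤ) := Int.natCast_nonneg s1
    rcases Nat.eq_zero_or_pos s1 with rfl | hs1p
    · push_cast
      push_cast at hn2
      nlinarith [hn2, mul_nonneg hA hA, mul_nonneg hs2 hs2, mul_nonneg hA hs2]
    · have hs1' : (1 : ℤ) ≤ (s1 : ℤ) := by exact_mod_cast hs1p
      rcases Nat.eq_zero_or_pos s2 with rfl | hs2p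
      · push_cast
        push_cast at hn2 hiso
        nlinarith [hn2, hiso, mul_nonneg hA hA, mul_nonneg hA hs1, mul_nonneg hs1 hs1]
      · have hs2' : (1 : ℤ) ≤ (s2 : ℤ) := by exact_mod_cast hs2p
        have hbb : (s2 : ℤ) ≤ (s2 : ℤ) * (s2 : ℤ) := le_mul_of_one_le_right hs2 hs2'
        have hbc : (s2 : ℤ) ≤ (s2 : ℤ) * (s1 : ℤ) := le_mul_of_one_le_right hs2 hs1'
        push_cast at hn2 hiso ⊢
        nlinarith [hn2, hiso, hbb, hbc, mul_nonneg hA hA, mul_nonneg hA hs1,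
          mul_nonneg hA hs2, mul_nonneg hs1 hs1]
  calc 60 * N = 15 * (4 * N) := by ring
    _ ≤ 15 * ((A + 2) ^ 2 + 4 * (s2 + s1)) := h60
    _ ≤ nn ^ 2 := hmain

/- ### picking the path / non-path edge of a cut -/

lemma four_mul_le_sq {a b : ℕ} : 4 * (a * b) ≤ (a + b) ^ 2 := by
  have h : (0:ℤ) ≤ ((a:ℤ) - b) ^ 2 := sq_nonneg _
  have h2 : (4:ℤ) * ((a:ℤ) * b) ≤ ((a:ℤ) + b) ^ 2 := by nlinarith
  exact_mod_cast h2

lemma pair_eq_of_card_two {α : Type*} [DecidableEq α] {s : Finset α} {a b : α}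
    (h2 : s.card = 2) (ha : a ∈ s) (hb : b ∈ s) (hab : a ≠ b) : s = {a, b} := by
  have hsub : ({a, b} : Finset α) ⊆ s := by
    intro x hx
    rcases Finset.mem_insert.1 hx with rfl | hx
    · exact ha
    · rw [Finset.mem_singleton.1 hx]; exact hb
  have hcard : ({a, b} : Finset α).card = 2 := by
    rw [Finset.card_insert_of_notMem (by simpa using hab), Finset.card_singleton]
  exact (Finset.eq_of_subset_of_card_le hsub (by omega)).symm

noncomputable def pickIn (G : SimpleGraph (Fin n)) (u : Fin n) (Wf : Finset (Sym2 (Fin n)))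
    (T : Finset (Fin n)) : Sym2 (Fin n) :=
  if h : (bd G T ∩ Wf).Nonempty then h.choose else s(u, u)

noncomputable def pickOut (G : SimpleGraph (Fin n)) (u : Fin n) (Wf : Finset (Sym2 (Fin n)))
    (T : Finset (Fin n)) : Sym2 (Fin n) :=
  if h : (bd G T \ Wf).Nonempty then h.choose else s(u, u)

lemma pickIn_mem {Wf : Finset (Sym2 (Fin n))} {T : Finset (Fin n)}
    (h : (bd G T ∩ Wf).Nonempty) : pickIn G u Wf T ∈ bd G T ∩ Wf := by
  rw [pickIn, dif_pos h]
  exact h.choose_spec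

lemma pickOut_mem {Wf : Finset (Sym2 (Fin n))} {T : Finset (Fin n)}
    (h : (bd G T \ Wf).Nonempty) : pickOut G u Wf T ∈ bd G T \ Wf := by
  rw [pickOut, dif_pos h]
  exact h.choose_spec

section Count

variable {r : ℕ} {c : ℕ → Finset (Fin n)}
variable (hreg : G.IsRegularOfDegree 4) (hreach : G.Reachable u v)
variable (hgood : ∀ i < r, good G u v (c i))
variable (hmono : ∀ i j, i < j → j < r → c i ⊂ c j)
variable (hmax : ∀ T, good G u v T → (∀ i < r, T ⊆ c i ∨ c i ⊆ T) → ∃ i < r, T = c i)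

include hreg hreach hgood hmono hmax in
lemma count_bound (hr : 0 < r) {Wf : Finset (Sym2 (Fin n))}
    (hW : ∀ T : Finset (Fin n), good G u v T → (bd G T ∩ Wf).card = 1) :
    4 * (SS G u v).card ≤ ((r - 1 - (brkSet G c r).card) + 2) ^ 2 + 4 * (brkSet G c r).card := by
  classical
  set s := (brkSet G c r).card with hs
  -- basic facts on the picks
  have hWout : ∀ T : Finset (Fin n), good G u v T → (bd G T \ Wf).card = 1 := by
    intro T hT
    have := Finset.card_inter_add_card_sdiff (bd G T) Wf
    rw [hT.two, hW T hT] at this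
    omega
  have hInmem : ∀ T : Finset (Fin n), good G u v T → pickIn G u Wf T ∈ bd G T ∩ Wf := by
    intro T hT
    exact pickIn_mem (Finset.card_pos.1 (by rw [hW T hT]; omega))
  have hOutmem : ∀ T : Finset (Fin n), good G u v T → pickOut G u Wf T ∈ bd G T \ Wf := by
    intro T hT
    exact pickOut_mem (Finset.card_pos.1 (by rw [hWout T hT]; omega))
  have hpair : ∀ T : Finset (Fin n), good G u v T →
      bd G T = {pickIn G u Wf T, pickOut G u Wf T} := by
    intro T hT
    have h1 := hInmem T hT
    have h2 := hOutmem T hT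
    rw [Finset.mem_inter] at h1
    rw [Finset.mem_sdiff] at h2
    exact pair_eq_of_card_two hT.two h1.1 h2.1 (by
      rintro heq
      rw [heq] at h1
      exact h2.2 h1.2)
  set ES := (Finset.range r).biUnion (fun i => bd G (c i)) with hES
  have hESpos : ∀ e ∈ ES, (posSet G c r e).Nonempty := by
    intro e he
    obtain ⟨i, hi, hie⟩ := Finset.mem_biUnion.1 he
    exact ⟨i, mem_posSet.2 ⟨Finset.mem_range.1 hi, hie⟩⟩
  set Qj : ℕ → Finset ℕ := fun j => (Finset.range r).filter (fun i => qq G c r i = j) with hQj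
  set Ej : ℕ → Finset (Sym2 (Fin n)) :=
    fun j => ES.filter (fun e => qq G c r (loE G c r e) = j) with hEj
  -- every good set's picks are in ES
  have hpicksES : ∀ T : Finset (Fin n), good G u v T → ∀ g ∈ bd G T, g ∈ ES := by
    intro T hT g hg
    obtain ⟨i, hi⟩ := covering hreg hreach hgood hmono hmax hT hg
    obtain ⟨hir, hibd⟩ := mem_posSet.1 hi
    exact Finset.mem_biUnion.2 ⟨i, Finset.mem_range.2 hir, hibd⟩
  -- fiberwise decomposition of SS
  have hSSsum : (SS G u v).card = ∑ j ∈ Finset.range (s + 1),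
      ((SS G u v).filter (fun T => qq G c r (loE G c r (pickIn G u Wf T)) = j)).card := by
    apply Finset.card_eq_sum_card_fiberwise
    intro T _
    rw [Finset.mem_coe, Finset.mem_range]
    dsimp only
    have := qq_le (G := G) (c := c) (r := r) (i := loE G c r (pickIn G u Wf T))
    omega
  -- per-run bound on the number of cuts
  have hNj : ∀ j, ((SS G u v).filter (fun T => qq G c r (loE G c r (pickIn G u Wf T)) = j)).card
      ≤ ((Ej j ∩ Wf).card) * ((Ej j \ Wf).card) := by
    intro j
    rw [← Finset.card_product]
    apply Finset.card_le_card_of_injOn (fun T => (pickIn G u Wf T, pickOut G u Wf T))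
    · intro T hT'
      rw [Finset.mem_coe, Finset.mem_filter] at hT'
      obtain ⟨hTss, hTq⟩ := hT'
      have hT := mem_SS_iff.1 hTss
      have h1 := hInmem T hT
      have h2 := hOutmem T hT
      rw [Finset.mem_inter] at h1
      rw [Finset.mem_sdiff] at h2
      have hsr := same_run hreg hreach hgood hmono hmax hT (hpair T hT)
      rw [Finset.mem_coe, Finset.mem_product]
      constructor
      · rw [Finset.mem_inter]
        exact ⟨Finset.mem_filter.2 ⟨hpicksES T hT _ h1.1, hTq⟩, h1.2⟩
      · rw [Finset.mem_sdiff]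
        refine ⟨Finset.mem_filter.2 ⟨hpicksES T hT _ h2.1, ?_⟩, h2.2⟩
        rw [← hsr]
        exact hTq
    · intro T1 hT1 T2 hT2 heq
      rw [Finset.mem_coe, Finset.mem_filter] at hT1 hT2
      have h1 := mem_SS_iff.1 hT1.1
      have h2 := mem_SS_iff.1 hT2.1
      apply good.bd_inj h1 h2
      rw [hpair T1 h1, hpair T2 h2]
      have e1 : pickIn G u Wf T1 = pickIn G u Wf T2 := congrArg Prod.fst heq
      have e2 : pickOut G u Wf T1 = pickOut G u Wf T2 := congrArg Prod.snd heq
      rw [e1, e2]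
  -- per-run bound on the number of run edges
  have hEjQ : ∀ j ≤ s, (Ej j).card ≤ (Qj j).card + 1 := by
    intro j hj
    have hQne : (Qj j).Nonempty := by
      obtain ⟨i, hir, hiq⟩ := qq_surj (G := G) (c := c) hr j hj
      refine ⟨i, ?_⟩
      show i ∈ (Finset.range r).filter (fun i' => qq G c r i' = j)
      exact Finset.mem_filter.2 ⟨Finset.mem_range.2 hir, hiq⟩
    set m0 := (Qj j).min' hQne with hm0
    have hm0mem : m0 ∈ Qj j := Finset.min'_mem _ _
    have hfib : (Ej j).card = ∑ i ∈ Qj j, ((Ej j).filter (fun e => loE G c r e = i)).card := by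
      apply Finset.card_eq_sum_card_fiberwise
      intro e he
      rw [Finset.mem_coe, Finset.mem_filter] at he
      obtain ⟨heES, heq⟩ := he
      have hpos := hESpos e heES
      obtain ⟨hlr, hlbd⟩ := mem_posSet.1 (loE_mem hpos)
      exact Finset.mem_filter.2 ⟨Finset.mem_range.2 hlr, heq⟩
    rw [hfib]
    have hbound : ∀ i ∈ Qj j, ((Ej j).filter (fun e => loE G c r e = i)).card
        ≤ if i = m0 then 2 else 1 := by
      intro i hi
      have hi' := hi
      rw [Finset.mem_filter, Finset.mem_range] at hi
      obtain ⟨hir, hiq⟩ := hi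
      have hfsub : (Ej j).filter (fun e => loE G c r e = i) ⊆ bd G (c i) := by
        intro e he
        rw [Finset.mem_filter] at he
        obtain ⟨he1, he2⟩ := he
        rw [Finset.mem_filter] at he1
        have hpos := hESpos e he1.1
        have := mem_posSet.1 (loE_mem hpos)
        rw [he2] at this
        exact this.2
      by_cases him : i = m0
      · rw [if_pos him]
        calc ((Ej j).filter (fun e => loE G c r e = i)).card ≤ (bd G (c i)).card :=
              Finset.card_le_card hfsub
          _ = 2 := (hgood i hir).two
      · rw [if_neg him]
        have hm0lt : m0 < i := by
          rcases lt_or_eq_of_le (Finset.min'_le _ _ hi') with h | h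
          · exact h
          · exact absurd h.symm him
        have hi1 : 1 ≤ i := by omega
        have hqim : qq G c r (i - 1) = j := by
          have hq1 : j ≤ qq G c r (i - 1) := by
            have h1 : qq G c r m0 = j := (Finset.mem_filter.1 hm0mem).2
            have := qq_mono (G := G) (c := c) (r := r) (show m0 ≤ i - 1 by omega)
            omega
          have hq2 : qq G c r (i - 1) ≤ j := by
            have := qq_mono (G := G) (c := c) (r := r) (show i - 1 ≤ i by omega)
            omega
          omega
        have hnb : i - 1 ∉ brkSet G c r := by
          intro hb
          have := qq_succ (G := G) (c := c) (r := r) (k := i - 1)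
          rw [show i - 1 + 1 = i by omega, if_pos hb] at this
          omega
        have hshare : (bd G (c (i - 1)) ∩ bd G (c i)).Nonempty := by
          rw [Finset.nonempty_iff_ne_empty]
          intro hempty
          exact hnb (mem_brkSet.2 ⟨by omega, by rw [show i - 1 + 1 = i by omega]; exact hempty⟩)
        obtain ⟨g, hg⟩ := hshare
        rw [Finset.mem_inter] at hg
        have hgpos : loE G c r g ≤ i - 1 := loE_le (mem_posSet.2 ⟨by omega, hg.1⟩)
        have hfsub2 : (Ej j).filter (fun e => loE G c r e = i) ⊆ (bd G (c i)).erase g := by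
          intro e he
          rw [Finset.mem_erase]
          refine ⟨?_, hfsub he⟩
          rintro rfl
          rw [Finset.mem_filter] at he
          omega
        calc ((Ej j).filter (fun e => loE G c r e = i)).card ≤ ((bd G (c i)).erase g).card :=
              Finset.card_le_card hfsub2
          _ = (bd G (c i)).card - 1 := Finset.card_erase_of_mem hg.2
          _ = 1 := by rw [(hgood i hir).two]
    calc (∑ i ∈ Qj j, ((Ej j).filter (fun e => loE G c r e = i)).card)
        ≤ ∑ i ∈ Qj j, (if i = m0 then 2 else 1) := Finset.sum_le_sum hbound
      _ = (Qj j).card + 1 := by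
          have : ∀ i, (if i = m0 then 2 else 1) = 1 + (if i = m0 then 1 else 0) := by
            intro i; split <;> rfl
          simp_rw [this]
          rw [Finset.sum_add_distrib, Finset.sum_ite_eq' (Qj j) m0 (fun _ => 1),
            if_pos hm0mem]
          simp [add_comm]
  -- sum of run lengths
  have hQsum : ∑ j ∈ Finset.range (s + 1), (Qj j).card = r := by
    have := Finset.card_eq_sum_card_fiberwise (f := qq G c r) (s := Finset.range r)
      (t := Finset.range (s + 1)) (fun i _ => by
        rw [Finset.mem_coe, Finset.mem_range]
        have := qq_le (G := G) (c := c) (r := r) (i := i)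
        omega)
    rw [Finset.card_range] at this
    rw [← this]
  have hQpos : ∀ j ∈ Finset.range (s + 1), 1 ≤ (Qj j).card := by
    intro j hj
    obtain ⟨i, hir, hiq⟩ := qq_surj (G := G) (c := c) hr j (by
      rw [Finset.mem_range] at hj; omega)
    refine Finset.card_pos.2 ⟨i, ?_⟩
    show i ∈ (Finset.range r).filter (fun i' => qq G c r i' = j)
    exact Finset.mem_filter.2 ⟨Finset.mem_range.2 hir, hiq⟩
  -- put it together
  have h4N : 4 * (SS G u v).card ≤ ∑ j ∈ Finset.range (s + 1), ((Qj j).card - 1 + 2) ^ 2 := by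
    rw [hSSsum, Finset.mul_sum]
    apply Finset.sum_le_sum
    intro j hj
    have h1 := hNj j
    have h2 : (Ej j ∩ Wf).card + (Ej j \ Wf).card = (Ej j).card :=
      Finset.card_inter_add_card_sdiff _ _
    have h3 := hEjQ j (by rw [Finset.mem_range] at hj; omega)
    have h4 : (Qj j).card + 1 = (Qj j).card - 1 + 2 := by
      have := hQpos j hj
      omega
    calc 4 * ((SS G u v).filter (fun T => qq G c r (loE G c r (pickIn G u Wf T)) = j)).card
        ≤ 4 * ((Ej j ∩ Wf).card * (Ej j \ Wf).card) := Nat.mul_le_mul_left 4 h1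
      _ ≤ ((Ej j ∩ Wf).card + (Ej j \ Wf).card) ^ 2 := four_mul_le_sq
      _ = (Ej j).card ^ 2 := by rw [h2]
      _ ≤ ((Qj j).card + 1) ^ 2 := Nat.pow_le_pow_left h3 2
      _ = ((Qj j).card - 1 + 2) ^ 2 := by rw [h4]
  have hgsum : (∑ j ∈ Finset.range (s + 1), ((Qj j).card - 1)) + (s + 1) = r := by
    have h1 : ∑ j ∈ Finset.range (s + 1), (((Qj j).card - 1) + 1)
        = ∑ j ∈ Finset.range (s + 1), (Qj j).card := by
      apply Finset.sum_congr rfl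
      intro j hj
      have := hQpos j hj
      omega
    rw [Finset.sum_add_distrib, Finset.sum_const, Finset.card_range, smul_eq_mul, mul_one] at h1
    omega
  have hmerge := merge_sq (s + 1) (fun j => (Qj j).card - 1) (by omega)
  have hfin : (∑ j ∈ Finset.range (s + 1), ((Qj j).card - 1)) = r - 1 - s := by omega
  rw [hfin] at hmerge
  have : 4 * (SS G u v).card ≤ (r - 1 - s + 2) ^ 2 + 4 * (s + 1 - 1) := le_trans h4N hmerge
  rw [Nat.add_sub_cancel] at this
  exact this

end Count


section Budget

variable {r : ℕ} {c : ℕ → Finset (Fin n)}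
variable (hreg : G.IsRegularOfDegree 4) (hreach : G.Reachable u v)
variable (hgood : ∀ i < r, good G u v (c i))
variable (hmono : ∀ i j, i < j → j < r → c i ⊂ c j)

include hreg hreach hgood hmono in
lemma budget (hr : 0 < r) : ∃ s2 s1 : ℕ, (brkSet G c r).card = s2 + s1 ∧
    (brkSet G c r).card ≤ r - 1 ∧
    10 + 5 * (r - 1 - (s2 + s1)) + 4 * s2 + s1 ≤ n ∧
    s1 ≤ (r - 1 - (s2 + s1)) + s2 + 1 := by
  classical
  set B := brkSet G c r with hB
  set T1 := B.filter (fun k => (c (k + 1) \ c k).card = 1) with hT1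
  have hT1sub : T1 ⊆ B := Finset.filter_subset _ _
  have hBsub : B ⊆ Finset.range (r - 1) := by
    intro k hk
    exact Finset.mem_range.2 (mem_brkSet.1 hk).1
  have hcards : (B \ T1).card + T1.card = B.card := Finset.card_sdiff_add_card_eq_card hT1sub
  have hBle : B.card ≤ r - 1 := by
    calc B.card ≤ (Finset.range (r - 1)).card := Finset.card_le_card hBsub
      _ = r - 1 := Finset.card_range _
  -- isolation of singleton breaks
  have hisoP : ∀ k ∈ T1, k + 1 ∉ T1 := by
    intro k hk hk1
    rw [hT1, Finset.mem_filter] at hk hk1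
    obtain ⟨hkB, hkone⟩ := hk
    obtain ⟨hk1B, hk1one⟩ := hk1
    obtain ⟨hkr, hkemp⟩ := mem_brkSet.1 hkB
    obtain ⟨hk1r, hk1emp⟩ := mem_brkSet.1 hk1B
    have h2 := iso_lemma hreg (hgood k (by omega)) (hgood (k + 1) (by omega))
      (hgood (k + 2) (by omega)) (hmono k (k + 1) (by omega) (by omega)).subset
      (hmono (k + 1) (k + 2) (by omega) (by omega)).subset hkemp hk1emp hkone
    rw [show k + 1 + 1 = k + 2 by omega] at hk1one
    omega
  have hisoC : 2 * T1.card ≤ (r - 1) + 1 := no_consec (hT1sub.trans hBsub) hisoP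
  -- telescoping
  have htel : ∀ m, m < r → (c m).card = (c 0).card +
      ∑ i ∈ Finset.range m, (c (i + 1) \ c i).card := by
    intro m
    induction m with
    | zero => intro _; simp
    | succ m ih =>
        intro hm
        have h1 : (c (m + 1) \ c m).card + (c m).card = (c (m + 1)).card :=
          Finset.card_sdiff_add_card_eq_card (hmono m (m + 1) (by omega) hm).subset
        have ihm := ih (by omega)
        have hs := Finset.sum_range_succ (fun i => (c (i + 1) \ c i).card) m
        omega
  -- per-gap lower bounds
  have hgap_share : ∀ i ∈ Finset.range (r - 1) \ B, 5 ≤ (c (i + 1) \ c i).card := by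
    intro i hi
    rw [Finset.mem_sdiff, Finset.mem_range] at hi
    obtain ⟨hir, hiB⟩ := hi
    have hne : bd G (c i) ∩ bd G (c (i + 1)) ≠ ∅ := by
      intro hemp
      exact hiB (mem_brkSet.2 ⟨hir, hemp⟩)
    obtain ⟨g, hg⟩ := Finset.nonempty_iff_ne_empty.2 hne
    rw [Finset.mem_inter] at hg
    exact gap_ge_five_of_shared hreg hreach (hgood i (by omega)) (hgood (i + 1) (by omega))
      (hmono i (i + 1) (by omega) (by omega)).subset
      (hmono i (i + 1) (by omega) (by omega)).ne hg.1 hg.2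
  have hgap_brk : ∀ k ∈ B \ T1, 4 ≤ (c (k + 1) \ c k).card := by
    intro k hk
    rw [Finset.mem_sdiff] at hk
    obtain ⟨hkB, hkT1⟩ := hk
    have hkr : k < r - 1 := (mem_brkSet.1 hkB).1
    have hpos : 1 ≤ (c (k + 1) \ c k).card := by
      obtain ⟨x, hx1, hx2⟩ := Finset.exists_of_ssubset (hmono k (k + 1) (by omega) (by omega))
      exact Finset.card_pos.2 ⟨x, Finset.mem_sdiff.2 ⟨hx1, hx2⟩⟩
    have hne1 : (c (k + 1) \ c k).card ≠ 1 := by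
      intro h1
      exact hkT1 (by rw [hT1, Finset.mem_filter]; exact ⟨hkB, h1⟩)
    exact card_ge_four hreg (gap_le_four hreg (hgood k (by omega)) (hgood (k + 1) (by omega)))
      (by omega)
  have hgap_T1 : ∀ k ∈ T1, 1 ≤ (c (k + 1) \ c k).card := by
    intro k hk
    rw [hT1, Finset.mem_filter] at hk
    omega
  -- summing
  have hsplit1 : (∑ i ∈ Finset.range (r - 1) \ B, (c (i + 1) \ c i).card)
      + (∑ i ∈ B, (c (i + 1) \ c i).card)
      = ∑ i ∈ Finset.range (r - 1), (c (i + 1) \ c i).card :=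
    Finset.sum_sdiff hBsub
  have hsplit2 : (∑ i ∈ B \ T1, (c (i + 1) \ c i).card)
      + (∑ i ∈ T1, (c (i + 1) \ c i).card)
      = ∑ i ∈ B, (c (i + 1) \ c i).card :=
    Finset.sum_sdiff hT1sub
  have hs1 : (Finset.range (r - 1) \ B).card * 5
      ≤ ∑ i ∈ Finset.range (r - 1) \ B, (c (i + 1) \ c i).card := by
    have := Finset.card_nsmul_le_sum (Finset.range (r - 1) \ B) _ 5 hgap_share
    simpa [smul_eq_mul] using this
  have hs2 : (B \ T1).card * 4 ≤ ∑ i ∈ B \ T1, (c (i + 1) \ c i).card := by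
    have := Finset.card_nsmul_le_sum (B \ T1) _ 4 hgap_brk
    simpa [smul_eq_mul] using this
  have hs3 : T1.card * 1 ≤ ∑ i ∈ T1, (c (i + 1) \ c i).card := by
    have := Finset.card_nsmul_le_sum T1 _ 1 hgap_T1
    simpa [smul_eq_mul] using this
  have hcompl : (Finset.range (r - 1) \ B).card = (r - 1) - B.card := by
    rw [Finset.card_sdiff_of_subset hBsub, Finset.card_range]
  -- ends
  have hend0 : 5 ≤ (c 0).card :=
    card_ge_five hreg (hgood 0 hr).two ⟨u, (hgood 0 hr).uS⟩
  have hgr : r - 1 < r := by omega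
  have hendr : 5 ≤ (Finset.univ \ c (r - 1)).card := by
    apply card_ge_five hreg
    · rw [show bd G (Finset.univ \ c (r - 1)) = bd G (c (r - 1)) from bd_compl _]
      exact (hgood (r - 1) hgr).two
    · exact ⟨v, Finset.mem_sdiff.2 ⟨Finset.mem_univ v, (hgood (r - 1) hgr).vS⟩⟩
  have htotal : (Finset.univ \ c (r - 1)).card + (c (r - 1)).card = n := by
    rw [Finset.card_sdiff_add_card_eq_card (Finset.subset_univ _), Finset.card_univ,
      Fintype.card_fin]
  have hteleq := htel (r - 1) hgr
  refine ⟨(B \ T1).card, T1.card, hcards.symm, hBle, ?_, ?_⟩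
  · omega
  · omega

end Budget


/- ### main counting lemma -/

lemma main_count (hreg : G.IsRegularOfDegree 4) (hreach : G.Reachable u v) :
    60 * (SS G u v).card ≤ n ^ 2 := by
  classical
  rcases Finset.eq_empty_or_nonempty (SS G u v) with hSS | hSS
  · rw [hSS, Finset.card_empty]
    exact Nat.zero_le _
  obtain ⟨S0, hS0⟩ := hSS
  set CH := (SS G u v).powerset.filter
    (fun C => ∀ S ∈ C, ∀ T ∈ C, S ⊆ T ∨ T ⊆ S) with hCH
  have hCHne : ({S0} : Finset (Finset (Fin n))) ∈ CH := by
    rw [hCH, Finset.mem_filter, Finset.mem_powerset]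
    refine ⟨Finset.singleton_subset_iff.2 hS0, ?_⟩
    intro S hS T hT
    rw [Finset.mem_singleton] at hS hT
    rw [hS, hT]
    exact Or.inl subset_rfl
  obtain ⟨C, hCmem, hCmax⟩ := Finset.exists_max_image CH Finset.card ⟨_, hCHne⟩
  have hCmem' := hCmem
  rw [hCH, Finset.mem_filter, Finset.mem_powerset] at hCmem'
  obtain ⟨hCss, hCcomp⟩ := hCmem'
  obtain ⟨c, hcmem, hcsurj, hcmono⟩ := chain_enum C.card C rfl hCcomp
  have hr : 0 < C.card := by
    have := hCmax {S0} hCHne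
    rw [Finset.card_singleton] at this
    omega
  have hgood : ∀ i < C.card, good G u v (c i) := fun i hi => mem_SS_iff.1 (hCss (hcmem i hi))
  have hmax : ∀ T, good G u v T → (∀ i < C.card, T ⊆ c i ∨ c i ⊆ T) → ∃ i < C.card, T = c i := by
    intro T hT hcomp
    by_cases hTC : T ∈ C
    · obtain ⟨i, hi, hie⟩ := hcsurj T hTC
      exact ⟨i, hi, hie.symm⟩
    · exfalso
      have hCH' : insert T C ∈ CH := by
        rw [hCH, Finset.mem_filter, Finset.mem_powerset]
        constructor
        · exact Finset.insert_subset (mem_SS_iff.2 hT) hCss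
        · intro S1 hS1 S2 hS2
          rcases Finset.mem_insert.1 hS1 with rfl | hS1C
          · rcases Finset.mem_insert.1 hS2 with rfl | hS2C
            · exact Or.inl subset_rfl
            · obtain ⟨i, hi, hie⟩ := hcsurj S2 hS2C
              rw [← hie]
              exact hcomp i hi
          · rcases Finset.mem_insert.1 hS2 with rfl | hS2C
            · obtain ⟨i, hi, hie⟩ := hcsurj S1 hS1C
              rw [← hie]
              exact (hcomp i hi).symm
            · exact hCcomp S1 hS1C S2 hS2C
      have := hCmax _ hCH'
      rw [Finset.card_insert_of_notMem hTC] at this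
      omega
  obtain ⟨Wf, hW⟩ := exists_path_finset hreach
  have hcount := count_bound hreg hreach hgood hcmono hmax hr hW
  obtain ⟨s2, s1, hseq, hsle, hbud, hiso⟩ := budget hreg hreach hgood hcmono hr
  rw [hseq] at hcount
  exact final_arith hcount hbud hiso

end TwoCutProof

/-- Let `G` be a `4`-regular simple graph on `n ≥ 8` vertices, and let
`u ≠ v` be vertices in the same connected component.  Then the number of 2-edge-cuts of
`G` separating `u` and `v` is at most `n² / 60`. -/
theorem two_edge_cuts_bound_four_regular (n : ℕ) (h8 : 8 ≤ n)
    (G : SimpleGraph (Fin n)) (hreg : G.IsRegularOfDegree 4)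
    (u v : Fin n) (huv : u ≠ v) (hreach : G.Reachable u v) :
    (Set.ncard {F : Set (Sym2 (Fin n)) | F ⊆ G.edgeSet ∧ F.ncard = 2 ∧
        ¬ (G.deleteEdges F).Reachable u v} : ℝ) ≤ (n : ℝ) ^ 2 / 60 := by
  classical
  have hmain := TwoCutProof.main_count (G := G) (u := u) (v := v) hreg hreach
  set cutSet := {F : Set (Sym2 (Fin n)) | F ⊆ G.edgeSet ∧ F.ncard = 2 ∧
      ¬ (G.deleteEdges F).Reachable u v} with hcs
  have hinj : Set.InjOn (fun F => TwoCutProof.comp G u F) cutSet := by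
    intro F1 h1 F2 h2 heq
    rw [hcs, Set.mem_setOf_eq] at h1 h2
    have e1 := (TwoCutProof.cut_good hreg hreach h1.1 h1.2.1 h1.2.2).2
    have e2 := (TwoCutProof.cut_good hreg hreach h2.1 h2.2.1 h2.2.2).2
    simp only at heq
    rw [← e1, ← e2, heq]
  have himg : (fun F => TwoCutProof.comp G u F) '' cutSet ⊆ ↑(TwoCutProof.SS G u v) := by
    rintro S ⟨F, hF, rfl⟩
    rw [hcs, Set.mem_setOf_eq] at hF
    exact Finset.mem_coe.2 (TwoCutProof.mem_SS_iff.2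
      (TwoCutProof.cut_good hreg hreach hF.1 hF.2.1 hF.2.2).1)
  have h1 : cutSet.ncard = ((fun F => TwoCutProof.comp G u F) '' cutSet).ncard :=
    (Set.ncard_image_of_injOn hinj).symm
  have h2 : ((fun F => TwoCutProof.comp G u F) '' cutSet).ncard
      ≤ ((TwoCutProof.SS G u v : Finset (Finset (Fin n))) : Set (Finset (Fin n))).ncard :=
    Set.ncard_le_ncard himg (Set.toFinite _)
  rw [Set.ncard_coe_finset] at h2
  have hle : cutSet.ncard ≤ (TwoCutProof.SS G u v).card := by omega
  have h3 : ((TwoCutProof.SS G u v).card : ℝ) ≤ (n : ℝ) ^ 2 / 60 := by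
    rw [le_div_iff₀ (by norm_num : (0:ℝ) < 60)]
    calc ((TwoCutProof.SS G u v).card : ℝ) * 60
        = ((60 * (TwoCutProof.SS G u v).card : ℕ) : ℝ) := by push_cast; ring
      _ ≤ ((n ^ 2 : ℕ) : ℝ) := by exact_mod_cast hmain
      _ = (n : ℝ) ^ 2 := by push_cast; ring
  calc (cutSet.ncard : ℝ) ≤ ((TwoCutProof.SS G u v).card : ℝ) := by exact_mod_cast hle
    _ ≤ (n : ℝ) ^ 2 / 60 := h3
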